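/- arXiv:2204.12719 — 6 statements merged into one kernel-verified Lean document; each statement's English description precedes it below -/
import Mathlib

section
/- Assume the open convex sets Ω₀ and Ω₁ satisfy the strict convexity condition; in the case d = 2 assume additionally the cone condition. Then for every point x ∈ Ω there exists a closed line segment ℓ ⊆ Ω passing through x whose two endpoints lie on ∂Ω₀. -/
set_option maxHeartbeats 2000000

open Set Filter Topology

noncomputable section

variable {E : Type*} [NormedAddCommGroup E] [NormedSpace ℝ E]


/-- In a closed convex set, a recession direction works from every point. -/
lemma ray_mem_of_mem {S : Set E} (hconv : Convex ℝ S) (hclosed : IsClosed S)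
    {y v : E} (hray : ∀ t : ℝ, 0 ≤ t → y + t • v ∈ S) {q : E} (hq : q ∈ S) :
    ∀ t : ℝ, 0 ≤ t → q + t • v ∈ S := by
  intro t ht
  have hmem : ∀ n : ℕ, q + t • v + (1 / ((n : ℝ) + 1)) • (y - q) ∈ S := by
    intro n
    set θ : ℝ := 1 / ((n : ℝ) + 1) with hθdef
    have hn : (0:ℝ) < (n : ℝ) + 1 := by positivity
    have hθ0 : 0 < θ := by positivity
    have hθ1 : θ ≤ 1 := by
      rw [hθdef, div_le_one hn]; have := Nat.cast_nonneg (α := ℝ) n; linarith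
    have hmul : θ * (((n : ℝ) + 1) * t) = t := by
      rw [hθdef]; field_simp
    have hc := hconv hq (hray (((n : ℝ) + 1) * t) (by positivity))
      (by linarith : (0:ℝ) ≤ 1 - θ) hθ0.le (by ring)
    have heq : (1 - θ) • q + θ • (y + (((n : ℝ) + 1) * t) • v)
        = q + t • v + θ • (y - q) := by
      rw [smul_add, smul_smul, hmul]
      module
    rwa [heq] at hc
  have hlim : Tendsto (fun n : ℕ => q + t • v + (1 / ((n : ℝ) + 1)) • (y - q))
      atTop (𝓝 (q + t • v)) := by
    have h0 := (tendsto_one_div_add_atTop_nhds_zero_nat : Tendsto (fun n : ℕ => 1 / ((n : ℝ) + 1)) atTop (𝓝 0)).smul_const (y - q)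
    simpa using tendsto_const_nhds.add h0
  exact hclosed.mem_of_tendsto hlim (Filter.Eventually.of_forall hmem)

/-- A proper closed strictly convex set contains no full line. -/
lemma no_line_in_strictconvex {S : Set E} (hconv : Convex ℝ S) (hclosed : IsClosed S)
    (hproper : S ≠ univ) (hstrict : StrictConvex ℝ S) {y v : E} (hv : v ≠ 0)
    (hline : ∀ t : ℝ, y + t • v ∈ S) : False := by
  have hSne : S.Nonempty := ⟨y, by simpa using hline 0⟩
  have hall : ∀ q ∈ S, ∀ t : ℝ, q + t • v ∈ S := by
    intro q hq t
    rcases le_or_gt 0 t with ht | ht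
    · exact ray_mem_of_mem hconv hclosed (fun s _ => hline s) hq t ht
    · have h2 : ∀ s : ℝ, 0 ≤ s → y + s • (-v) ∈ S := by
        intro s _; simpa [smul_neg, sub_eq_add_neg] using hline (-s)
      have := ray_mem_of_mem hconv hclosed h2 hq (-t) (by linarith)
      simpa [smul_neg] using this
  haveI : PreconnectedSpace E := ⟨(convex_univ : Convex ℝ (univ : Set E)).isPreconnected⟩
  have hfr : (frontier S).Nonempty := by
    by_contra h
    rw [Set.not_nonempty_iff_eq_empty] at h
    rcases isClopen_iff.mp (isClopen_iff_frontier_eq_empty.mpr h) with h1 | h1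
    · exact hSne.ne_empty h1
    · exact hproper h1
  obtain ⟨p, hp⟩ := hfr
  rw [show frontier S = closure S \ interior S from rfl, hclosed.closure_eq] at hp
  obtain ⟨hpS, hpni⟩ := hp
  have hne : p ≠ p + (1:ℝ) • v := by
    intro h
    apply hv
    have := left_eq_add.mp h
    simpa using this
  have hm : p + (2⁻¹ : ℝ) • v ∈ interior S := by
    have h2 := hstrict hpS (hall p hpS 1) hne one_half_pos one_half_pos (by norm_num)
    convert h2 using 1
    module
  have hp2 : p ∈ interior S := by
    have hq : p + (-(2⁻¹) : ℝ) • v ∈ closure S := subset_closure (hall p hpS _)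
    have h3 := hconv.combo_interior_closure_mem_interior hm hq one_half_pos
      one_half_pos.le (by norm_num)
    have heq : ((1:ℝ)/2) • (p + (2⁻¹ : ℝ) • v) + ((1:ℝ)/2) • (p + (-(2⁻¹) : ℝ) • v) = p := by
      norm_num
      module
    rwa [heq] at h3
  exact hpni hp2

/-- Points of the interior of a sublevel set take values strictly below the level. -/
lemma interior_lt_of_le {S : Set E} {f : E →L[ℝ] ℝ} {c : ℝ} (hS : ∀ w ∈ S, f w ≤ c)
    {u : E} (hu : f u = 1) {p : E} (hp : p ∈ interior S) : f p < c := by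
  obtain ⟨ε, hε, hball⟩ := Metric.isOpen_iff.mp isOpen_interior p hp
  have hu0 : u ≠ 0 := by rintro rfl; simp at hu
  have hnu : (0:ℝ) < ‖u‖ := norm_pos_iff.mpr hu0
  set δ : ℝ := ε / (2 * ‖u‖) with hδdef
  have hδ : 0 < δ := by positivity
  have hmem : p + δ • u ∈ S := by
    refine interior_subset (hball ?_)
    rw [Metric.mem_ball, dist_eq_norm]
    have : p + δ • u - p = δ • u := by abel
    have hcalc : δ * ‖u‖ = ε / 2 := by
      rw [hδdef]; field_simp
    rw [this, norm_smul, Real.norm_eq_abs, abs_of_pos hδ, hcalc]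
    linarith
  have hfp := hS _ hmem
  rw [map_add, map_smul, hu, smul_eq_mul, mul_one] at hfp
  linarith

/-- A recession direction of the closure pushes interior points of an open convex set
into the set. -/
lemma ray_interior {S : Set E} (hconv : Convex ℝ S) (hopen : IsOpen S)
    {x v : E} (hx : ∀ t : ℝ, 0 ≤ t → x + t • v ∈ closure S) {q : E} (hq : q ∈ S) :
    ∀ t : ℝ, 0 ≤ t → q + t • v ∈ S := by
  intro t ht
  rcases eq_or_lt_of_le ht with h | ht
  · rw [← h]; simpa using hq
  have hg : Tendsto (fun θ : ℝ => (1 - θ)⁻¹ • (q - θ • x)) (𝓝 0) (𝓝 q) := by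
    have h1 : Tendsto (fun θ : ℝ => (1 - θ)⁻¹) (𝓝 0) (𝓝 ((1 - 0)⁻¹)) :=
      ((continuous_const.sub continuous_id).tendsto 0).inv₀ (by norm_num)
    have h2 : Tendsto (fun θ : ℝ => q - θ • x) (𝓝 0) (𝓝 (q - (0:ℝ) • x)) :=
      tendsto_const_nhds.sub (tendsto_id.smul_const x)
    simpa using h1.smul h2
  have hev1 : ∀ᶠ θ : ℝ in 𝓝[>] 0, (1 - θ)⁻¹ • (q - θ • x) ∈ S :=
    eventually_nhdsWithin_of_eventually_nhds (hg.eventually (hopen.eventually_mem hq))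
  have hev2 : ∀ᶠ θ : ℝ in 𝓝[>] (0:ℝ), θ ∈ Ioo (0:ℝ) 1 := Ioo_mem_nhdsGT zero_lt_one
  obtain ⟨θ, hθS, hθ0, hθ1⟩ := (hev1.and hev2).exists
  have hθne : (1 - θ) ≠ 0 := by linarith
  have hc := hconv.combo_interior_closure_mem_interior (x := (1 - θ)⁻¹ • (q - θ • x))
    (y := x + (t / θ) • v) (a := 1 - θ) (b := θ)
    (by rwa [hopen.interior_eq]) (hx (t / θ) (by positivity)) (by linarith) hθ0.le (by ring)
  rw [hopen.interior_eq] at hc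
  have heq : (1 - θ) • ((1 - θ)⁻¹ • (q - θ • x)) + θ • (x + (t / θ) • v) = q + t • v := by
    rw [smul_inv_smul₀ hθne, smul_add, smul_smul, mul_div_cancel₀ _ hθ0.ne']
    module
  rwa [heq] at hc



/-- The cone condition: every ray contained in `Ω₀` has a translate contained in `Ω₁`. -/
def ConeCondition {d : ℕ} (Ω₀ Ω₁ : Set (EuclideanSpace ℝ (Fin d))) : Prop :=
  ∀ x v : EuclideanSpace ℝ (Fin d), v ≠ 0 →
    (∀ t : ℝ, 0 ≤ t → x + t • v ∈ Ω₀) →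
    ∃ y : EuclideanSpace ℝ (Fin d), ∀ t : ℝ, 0 ≤ t → y + t • v ∈ Ω₁

/-- For every point `x` of `Ω = cl Ω₀ \ Ω₁` there is a segment contained in `Ω` passing
through `x` whose endpoints lie on `∂Ω₀`. -/
theorem statement0 {d : ℕ} (hd : 2 ≤ d)
    (Ω₀ Ω₁ : Set (EuclideanSpace ℝ (Fin d)))
    (h0open : IsOpen Ω₀) (h0conv : Convex ℝ Ω₀) (h0ne : Ω₀.Nonempty)
    (h0proper : Ω₀ ≠ Set.univ)
    (h1open : IsOpen Ω₁) (h1conv : Convex ℝ Ω₁) (h1ne : Ω₁.Nonempty)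
    (hcl : closure Ω₁ ⊆ Ω₀)
    (hsc0 : StrictConvex ℝ (closure Ω₀)) (hsc1 : StrictConvex ℝ (closure Ω₁))
    (hcone : d = 2 → ConeCondition Ω₀ Ω₁) :
    ∀ x ∈ closure Ω₀ \ Ω₁, ∃ y z : EuclideanSpace ℝ (Fin d),
      y ∈ frontier Ω₀ ∧ z ∈ frontier Ω₀ ∧ x ∈ segment ℝ y z ∧
      segment ℝ y z ⊆ closure Ω₀ \ Ω₁ := by
  intro x hx
  obtain ⟨hxK, hxΩ1⟩ := hx
  set K := closure Ω₀ with hKdef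
  have hKconv : Convex ℝ K := h0conv.closure
  have hKclosed : IsClosed K := isClosed_closure
  obtain ⟨f, hf⟩ := geometric_hahn_banach_open_point h1conv h1open hxΩ1
  obtain ⟨x₁, hx₁⟩ := h1ne
  have hfx₁ : f x₁ < f x := hf x₁ hx₁
  set u : EuclideanSpace ℝ (Fin d) := (f x - f x₁)⁻¹ • (x - x₁) with hudef
  have hfu : f u = 1 := by
    rw [hudef, map_smul, map_sub, smul_eq_mul,
      inv_mul_cancel₀ (ne_of_gt (by linarith : (0:ℝ) < f x - f x₁))]
  have hclΩ₁le : ∀ w ∈ closure Ω₁, f w ≤ f x := fun w hw =>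
    closure_minimal (fun a ha => (hf a ha).le)
      (isClosed_le f.continuous continuous_const) hw
  have hKproper : K ≠ univ := by
    obtain ⟨z, hz⟩ := (Set.ne_univ_iff_exists_notMem _).mp h0proper
    obtain ⟨g, hg⟩ := geometric_hahn_banach_open_point h0conv h0open hz
    obtain ⟨a₀, ha₀⟩ := h0ne
    have hga₀ : g a₀ < g z := hg a₀ ha₀
    have hKle : ∀ w ∈ K, g w ≤ g z := fun w hw =>
      closure_minimal (fun a ha => (hg a ha).le)
        (isClosed_le g.continuous continuous_const) hw
    intro hU
    have h1 : g ((g z - g a₀)⁻¹ • (z - a₀)) = 1 := by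
      rw [map_smul, map_sub, smul_eq_mul,
        inv_mul_cancel₀ (ne_of_gt (by linarith : (0:ℝ) < g z - g a₀))]
    have h2 : g (z + (g z - g a₀)⁻¹ • (z - a₀)) ≤ g z := by
      refine hKle _ ?_
      rw [hU]; trivial
    rw [map_add, h1] at h2; linarith
  set Cs : Set (EuclideanSpace ℝ (Fin d)) := {v | ∀ t : ℝ, 0 ≤ t → x + t • v ∈ K} with hCsdef
  have hCpointed : ∀ v, v ≠ 0 → v ∈ Cs → -v ∈ Cs → False := by
    intro v hv h1 h2
    refine no_line_in_strictconvex hKconv hKclosed hKproper hsc0 hv (y := x) ?_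
    intro t
    rcases le_or_gt 0 t with ht | ht
    · exact h1 t ht
    · have := h2 (-t) (by linarith)
      simpa [smul_neg] using this
  have hCsclosed : IsClosed Cs := by
    have hrw : Cs = ⋂ t : ℝ, {v : EuclideanSpace ℝ (Fin d) | 0 ≤ t → x + t • v ∈ K} := by
      ext v; simp [hCsdef, Set.mem_iInter]
    rw [hrw]
    refine isClosed_iInter fun t => ?_
    by_cases ht : 0 ≤ t
    · have h2 : {v : EuclideanSpace ℝ (Fin d) | 0 ≤ t → x + t • v ∈ K}
          = (fun v : EuclideanSpace ℝ (Fin d) => x + t • v) ⁻¹' K := by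
        ext v; simp [ht]
      rw [h2]
      exact hKclosed.preimage (continuous_const.add (continuous_id.const_smul t))
    · have h2 : {v : EuclideanSpace ℝ (Fin d) | 0 ≤ t → x + t • v ∈ K} = univ := by
        ext v; simp [ht]
      rw [h2]; exact isClosed_univ
  have hA : ∃ v : EuclideanSpace ℝ (Fin d), v ≠ 0 ∧ (∀ t : ℝ, x + t • v ∉ Ω₁) ∧
      v ∉ Cs ∧ -v ∉ Cs := by
    by_contra hcon
    push_neg at hcon
    have hH : ∀ v : EuclideanSpace ℝ (Fin d), v ≠ 0 → (∀ t : ℝ, x + t • v ∉ Ω₁) →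
        v ∈ Cs ∨ -v ∈ Cs := by
      intro v hv hmiss
      by_contra h
      push_neg at h
      exact h.2 (hcon v hv hmiss h.1)
    set fl := (f : EuclideanSpace ℝ (Fin d) →ₗ[ℝ] ℝ) with hfldef
    have hker : d - 1 ≤ Module.finrank ℝ (LinearMap.ker fl) := by
      have h1 := fl.finrank_range_add_finrank_ker
      have h2 : Module.finrank ℝ (LinearMap.range fl) ≤ 1 := by
        have h3 := Submodule.finrank_le (LinearMap.range fl)
        simpa using h3
      have h4 : Module.finrank ℝ (EuclideanSpace ℝ (Fin d)) = d := finrank_euclideanSpace_fin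
      omega
    have hmiss_of_ker : ∀ v ∈ LinearMap.ker fl, ∀ t : ℝ, x + t • v ∉ Ω₁ := by
      intro v hv t hmem
      have h1 := hf _ hmem
      have hfv : f v = 0 := hv
      rw [map_add, map_smul, smul_eq_mul, hfv, mul_zero, add_zero] at h1
      exact lt_irrefl _ h1
    have hkerne : LinearMap.ker fl ≠ ⊥ := by
      intro h
      rw [h, finrank_bot] at hker
      omega
    obtain ⟨v₀, hv₀ker, hv₀ne⟩ := (Submodule.ne_bot_iff _).mp hkerne
    rcases eq_or_lt_of_le hd with hd2 | hd3
    · -- d = 2 : use the cone condition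
      have hconeC := hcone hd2.symm
      obtain ⟨v₁, hv₁C, hv₁ker, hv₁ne⟩ :
          ∃ v₁, v₁ ∈ Cs ∧ v₁ ∈ LinearMap.ker fl ∧ v₁ ≠ 0 := by
        rcases hH v₀ hv₀ne (hmiss_of_ker v₀ hv₀ker) with h | h
        · exact ⟨v₀, h, hv₀ker, hv₀ne⟩
        · exact ⟨-v₀, h, Submodule.neg_mem _ hv₀ker, neg_ne_zero.mpr hv₀ne⟩
      have hfv₁ : f v₁ = 0 := hv₁ker
      have hx₁Ω₀ : x₁ ∈ Ω₀ := hcl (subset_closure hx₁)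
      set Dset : Set (EuclideanSpace ℝ (Fin d)) :=
        {w | ∃ r : ℝ, 0 < r ∧ x + r • w ∈ Ω₁} with hDdef
      have hDle : ∀ w ∈ Dset, f w < 0 := by
        rintro w ⟨r, hr, hmem⟩
        have h1 := hf _ hmem
        rw [map_add, map_smul, smul_eq_mul] at h1
        nlinarith
      have hclDle : ∀ w ∈ closure Dset, f w ≤ 0 := fun w hw =>
        closure_minimal (fun a ha => (hDle a ha).le)
          (isClosed_le f.continuous continuous_const) hw
      have hCD : ∀ v, v ≠ 0 → v ∈ Cs → v ∈ closure Dset := by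
        intro v hvne hvC
        have hray : ∀ t : ℝ, 0 ≤ t → x₁ + t • v ∈ Ω₀ :=
          ray_interior h0conv h0open hvC hx₁Ω₀
        obtain ⟨yv, hyv⟩ := hconeC x₁ v hvne hray
        have hmemD : ∀ n : ℕ, (1/((n:ℝ)+1)) • (yv - x) + v ∈ Dset := by
          intro n
          refine ⟨(n:ℝ)+1, by positivity, ?_⟩
          have heq : x + (((n:ℝ)+1)) • ((1/((n:ℝ)+1)) • (yv - x) + v)
              = yv + (((n:ℝ)+1)) • v := by
            rw [smul_add, smul_smul, mul_one_div,
              div_self (by positivity : ((n:ℝ)+1) ≠ 0), one_smul]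
            module
          rw [heq]
          exact hyv _ (by positivity)
        have hlim : Tendsto (fun n : ℕ => (1/((n:ℝ)+1)) • (yv - x) + v) atTop (𝓝 v) := by
          have h0 := (tendsto_one_div_add_atTop_nhds_zero_nat : Tendsto (fun n : ℕ => 1 / ((n : ℝ) + 1)) atTop (𝓝 0)).smul_const (yv - x)
          simpa using h0.add tendsto_const_nhds
        exact mem_closure_of_tendsto hlim (Eventually.of_forall hmemD)
      have hS1 : ∀ w, f w < 0 → w ∈ closure Dset := by
        intro w hw
        have hwne : w ≠ 0 := by rintro rfl; simp at hw
        by_cases hD : w ∈ Dset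
        · exact subset_closure hD
        · have hnD : -w ∉ Dset := by
            intro hmem
            have h1 := hDle _ hmem
            rw [map_neg] at h1; linarith
          have hmiss : ∀ t : ℝ, x + t • w ∉ Ω₁ := by
            intro t hmem
            rcases lt_trichotomy t 0 with h | h | h
            · refine hnD ⟨-t, by linarith, ?_⟩
              have : (-t) • (-w) = t • w := by rw [smul_neg, neg_smul, neg_neg]
              rwa [this]
            · rw [h, zero_smul, add_zero] at hmem; exact hxΩ1 hmem
            · exact hD ⟨t, h, hmem⟩
          rcases hH w hwne hmiss with h | h
          · exact hCD w hwne h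
          · exfalso
            have h1 := hclDle _ (hCD (-w) (neg_ne_zero.mpr hwne) h)
            rw [map_neg] at h1; linarith
      have hneg : -v₁ ∈ closure Dset := by
        have hmemn : ∀ n : ℕ, -v₁ + (1/((n:ℝ)+1)) • (-u) ∈ closure Dset := by
          intro n
          apply hS1
          rw [map_add, map_neg, map_smul, map_neg, hfv₁, hfu, smul_eq_mul]
          have : (0:ℝ) < 1/((n:ℝ)+1) := by positivity
          simp only [neg_zero, zero_add, mul_neg_one]
          linarith
        have hlim : Tendsto (fun n : ℕ => -v₁ + (1/((n:ℝ)+1)) • (-u)) atTop (𝓝 (-v₁)) := by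
          have h0 := (tendsto_one_div_add_atTop_nhds_zero_nat : Tendsto (fun n : ℕ => 1 / ((n : ℝ) + 1)) atTop (𝓝 0)).smul_const (-u)
          simpa using tendsto_const_nhds.add h0
        have h2 : -v₁ ∈ closure (closure Dset) :=
          mem_closure_of_tendsto hlim (Eventually.of_forall hmemn)
        rwa [closure_closure] at h2
      obtain ⟨dseq, hdseqD, hdtend⟩ := mem_closure_iff_seq_limit.mp hneg
      choose rseq hrpos hrmem using hdseqD
      -- the ray from the cone condition in direction v₁
      obtain ⟨y₁, hy₁⟩ := hconeC x₁ v₁ hv₁ne (ray_interior h0conv h0open hv₁C hx₁Ω₀)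
      have hy₁0 : y₁ ∈ Ω₁ := by
        have := hy₁ 0 le_rfl; simpa using this
      by_cases hP : ∃ s : ℝ, 0 ≤ s ∧ x + s • (-v₁) ∈ closure Ω₁
      · obtain ⟨s, hs0, hsmem⟩ := hP
        have hq2 : (x + s • (-v₁)) + (1:ℝ) • v₁ ∈ closure Ω₁ :=
          ray_mem_of_mem h1conv.closure isClosed_closure
            (fun t ht => subset_closure (hy₁ t ht)) hsmem 1 zero_le_one
        have hfq : f (x + s • (-v₁)) = f x := by
          rw [map_add, map_smul, map_neg, hfv₁, smul_eq_mul]; ring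
        have hfq2 : f ((x + s • (-v₁)) + (1:ℝ) • v₁) = f x := by
          rw [map_add, map_smul, hfq, hfv₁, smul_eq_mul]; ring
        have hne2 : (x + s • (-v₁)) ≠ (x + s • (-v₁)) + (1:ℝ) • v₁ := by
          intro h
          apply hv₁ne
          have := left_eq_add.mp h
          simpa using this
        have hm := hsc1 hsmem hq2 hne2 one_half_pos one_half_pos (by norm_num)
        have hlt := interior_lt_of_le hclΩ₁le hfu hm
        have hfm : f ((1/2:ℝ) • (x + s • (-v₁))
            + (1/2:ℝ) • ((x + s • (-v₁)) + (1:ℝ) • v₁)) = f x := by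
          simp only [map_add, map_smul, map_neg, hfv₁, smul_eq_mul]
          ring
        rw [hfm] at hlt
        exact lt_irrefl _ hlt
      · by_cases hub : ∀ s : ℝ, ∀ᶠ n in atTop, s < rseq n
        · have htop : Tendsto rseq atTop atTop :=
            tendsto_atTop.mpr fun b => (hub b).mono fun n h => h.le
          have hlineneg : ∀ s : ℝ, 0 ≤ s → y₁ + s • (-v₁) ∈ closure Ω₁ := by
            intro s hs
            have hctend : Tendsto (fun n => s / rseq n) atTop (𝓝 0) :=
              tendsto_const_nhds.div_atTop htop
            have hFlim : Tendsto (fun n => y₁ + (s / rseq n) • (x - y₁) + s • dseq n)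
                atTop (𝓝 (y₁ + s • (-v₁))) := by
              have h1 := hctend.smul_const (x - y₁)
              have h2 : Tendsto (fun n => s • dseq n) atTop (𝓝 (s • (-v₁))) :=
                hdtend.const_smul s
              have h3 : Tendsto (fun n => y₁ + (s / rseq n) • (x - y₁) + s • dseq n)
                  atTop (𝓝 (y₁ + (0:ℝ) • (x - y₁) + s • (-v₁))) :=
                (tendsto_const_nhds.add h1).add h2
              simpa using h3
            have hev : ∀ᶠ n in atTop,
                y₁ + (s / rseq n) • (x - y₁) + s • dseq n ∈ Ω₁ := by
              filter_upwards [hub s] with n hn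
              have hrn : 0 < rseq n := hrpos n
              have hb0 : 0 ≤ s / rseq n := by positivity
              have hb1 : s / rseq n ≤ 1 := by
                rw [div_le_one hrn]; linarith
              have hcomb := h1conv hy₁0 (hrmem n)
                (by linarith : (0:ℝ) ≤ 1 - s / rseq n) hb0 (by ring)
              have heq : (1 - s / rseq n) • y₁ + (s / rseq n) • (x + rseq n • dseq n)
                  = y₁ + (s / rseq n) • (x - y₁) + s • dseq n := by
                rw [smul_add, smul_smul, div_mul_cancel₀ _ hrn.ne']
                module
              rwa [heq] at hcomb
            exact mem_closure_of_tendsto hFlim hev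
          have hline : ∀ t : ℝ, y₁ + t • v₁ ∈ closure Ω₁ := by
            intro t
            rcases le_or_gt 0 t with ht | ht
            · exact subset_closure (hy₁ t ht)
            · have h1 := hlineneg (-t) (by linarith)
              have heq : y₁ + (-t) • (-v₁) = y₁ + t • v₁ := by module
              rwa [heq] at h1
          have hprop1 : closure Ω₁ ≠ univ := by
            intro hU
            have h1 := hclΩ₁le (x + u) (by rw [hU]; trivial)
            rw [map_add, hfu] at h1; linarith
          exact no_line_in_strictconvex h1conv.closure isClosed_closure hprop1 hsc1
            hv₁ne hline
        · push_neg at hub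
          obtain ⟨s, hs⟩ := hub
          have hfreq : ∃ᶠ n in atTop, rseq n ≤ s := by
            have h1 : ∃ᶠ n in atTop, ¬ s < rseq n := hs.mono fun n hn => not_lt.mpr hn
            exact h1.mono fun n hn => not_lt.mp hn
          obtain ⟨φ, hφ, hφs⟩ := extraction_of_frequently_atTop hfreq
          have hsub : ∀ n, rseq (φ n) ∈ Icc (0:ℝ) s := fun n => ⟨(hrpos _).le, hφs n⟩
          obtain ⟨l, hlIcc, ψ, hψ, hllim⟩ := isCompact_Icc.tendsto_subseq hsub
          have hdlim2 : Tendsto (fun n => dseq (φ (ψ n))) atTop (𝓝 (-v₁)) :=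
            hdtend.comp ((hφ.comp hψ).tendsto_atTop)
          have hptlim : Tendsto (fun n => x + rseq (φ (ψ n)) • dseq (φ (ψ n)))
              atTop (𝓝 (x + l • (-v₁))) :=
            tendsto_const_nhds.add (hllim.smul hdlim2)
          exact hP ⟨l, hlIcc.1, mem_closure_of_tendsto hptlim
            (Eventually.of_forall fun n => hrmem _)⟩
    · -- 2 < d
      have hker2 : 2 ≤ Module.finrank ℝ (LinearMap.ker fl) := by omega
      have hwex : ∃ w, w ∈ LinearMap.ker fl ∧ w ∉ Submodule.span ℝ {v₀} := by
        by_contra h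
        push_neg at h
        have hle : LinearMap.ker fl ≤ Submodule.span ℝ {v₀} := fun w hw => h w hw
        have h2 := Submodule.finrank_mono hle
        rw [finrank_span_singleton hv₀ne] at h2
        omega
      obtain ⟨w₀, hw₀ker, hw₀span⟩ := hwex
      have hw₀ne : w₀ ≠ 0 := fun h => hw₀span (h ▸ Submodule.zero_mem _)
      obtain ⟨u₁, hu₁C, hu₁⟩ : ∃ u₁, u₁ ∈ Cs ∧ (u₁ = v₀ ∨ u₁ = -v₀) := by
        rcases hH v₀ hv₀ne (hmiss_of_ker v₀ hv₀ker) with h | h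
        · exact ⟨v₀, h, Or.inl rfl⟩
        · exact ⟨-v₀, h, Or.inr rfl⟩
      obtain ⟨w₁, hw₁C, hw₁⟩ : ∃ w₁, w₁ ∈ Cs ∧ (w₁ = w₀ ∨ w₁ = -w₀) := by
        rcases hH w₀ hw₀ne (hmiss_of_ker w₀ hw₀ker) with h | h
        · exact ⟨w₀, h, Or.inl rfl⟩
        · exact ⟨-w₀, h, Or.inr rfl⟩
      have hu₁ne : u₁ ≠ 0 := by
        rcases hu₁ with rfl | rfl
        · exact hv₀ne
        · exact neg_ne_zero.mpr hv₀ne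
      have hw₁ne : w₁ ≠ 0 := by
        rcases hw₁ with rfl | rfl
        · exact hw₀ne
        · exact neg_ne_zero.mpr hw₀ne
      have hu₁ker : u₁ ∈ LinearMap.ker fl := by
        rcases hu₁ with rfl | rfl
        · exact hv₀ker
        · exact Submodule.neg_mem _ hv₀ker
      have hw₁ker : w₁ ∈ LinearMap.ker fl := by
        rcases hw₁ with rfl | rfl
        · exact hw₀ker
        · exact Submodule.neg_mem _ hw₀ker
      set p : ℝ → EuclideanSpace ℝ (Fin d) := fun t => (1 - t) • u₁ + t • (-w₁) with hpdef
      have hpcont : Continuous p := by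
        apply Continuous.add
        · exact (continuous_const.sub continuous_id).smul continuous_const
        · exact continuous_id.smul continuous_const
      have hpne : ∀ t : ℝ, p t ≠ 0 := by
        intro t h
        rw [hpdef] at h
        simp only at h
        have h' : (1 - t) • u₁ = t • w₁ := by
          rw [smul_neg, add_neg_eq_zero] at h; exact h
        by_cases ht : t = 0
        · rw [ht] at h'
          simp at h'
          exact hu₁ne h'
        · apply hw₀span
          have hwspan : w₁ ∈ Submodule.span ℝ {v₀} := by
            have heq : w₁ = (t⁻¹ * (1 - t)) • u₁ := by
              rw [mul_smul, h', inv_smul_smul₀ ht]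
            rw [heq]
            apply Submodule.smul_mem
            rcases hu₁ with rfl | rfl
            · exact Submodule.mem_span_singleton_self _
            · exact Submodule.neg_mem _ (Submodule.mem_span_singleton_self _)
          rcases hw₁ with h1 | h1
          · rwa [h1] at hwspan
          · have h2 := Submodule.neg_mem _ hwspan
            rwa [h1, neg_neg] at h2
      have hpker : ∀ t : ℝ, p t ∈ LinearMap.ker fl := fun t =>
        Submodule.add_mem _ (Submodule.smul_mem _ _ hu₁ker)
          (Submodule.smul_mem _ _ (Submodule.neg_mem _ hw₁ker))
      have hcover : ∀ t : ℝ, p t ∈ Cs ∨ -(p t) ∈ Cs := fun t =>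
        hH _ (hpne t) (hmiss_of_ker _ (hpker t))
      set Ns : Set (EuclideanSpace ℝ (Fin d)) := (fun v => -v) ⁻¹' Cs with hNdef
      have hNsclosed : IsClosed Ns := hCsclosed.preimage continuous_neg
      have hres := (isPreconnected_Icc (a := (0:ℝ)) (b := 1)) ((p ⁻¹' Cs)ᶜ) ((p ⁻¹' Ns)ᶜ)
        (hCsclosed.preimage hpcont).isOpen_compl (hNsclosed.preimage hpcont).isOpen_compl
        (by
          intro t _
          rw [Set.mem_union, Set.mem_compl_iff, Set.mem_compl_iff,
            Set.mem_preimage, Set.mem_preimage]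
          by_contra h
          push_neg at h
          obtain ⟨h1, h2⟩ := h
          exact hCpointed _ (hpne t) h1 h2)
        (by
          refine ⟨1, ⟨by norm_num, le_refl 1⟩, ?_⟩
          intro hmem
          rw [Set.mem_preimage] at hmem
          have hp1 : p 1 = -w₁ := by
            rw [hpdef]; simp
          rw [hp1] at hmem
          exact hCpointed w₁ hw₁ne hw₁C hmem)
        (by
          refine ⟨0, ⟨le_refl 0, by norm_num⟩, ?_⟩
          intro hmem
          rw [Set.mem_preimage, Set.mem_preimage] at hmem
          have hp0 : p 0 = u₁ := by
            rw [hpdef]; simp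
          rw [hp0] at hmem
          exact hCpointed u₁ hu₁ne hu₁C hmem)
      obtain ⟨t, htIcc, htu, htv⟩ := hres
      rcases hcover t with h | h
      · exact htu h
      · exact htv h
  obtain ⟨v, hv0, hmiss, hvp, hvm⟩ := hA
  have hvp' : ∃ t : ℝ, 0 ≤ t ∧ x + t • v ∉ K := by
    by_contra h; push_neg at h; exact hvp (fun t ht => h t ht)
  have hvm' : ∃ t : ℝ, 0 ≤ t ∧ x + t • (-v) ∉ K := by
    by_contra h; push_neg at h; exact hvm (fun t ht => h t ht)
  obtain ⟨tp, htp0, htp⟩ := hvp'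
  obtain ⟨tm, htm0, htm⟩ := hvm'
  set T : Set ℝ := {t | x + t • v ∈ K} with hTdef
  have hTconv : Convex ℝ T := by
    intro t₁ ht₁ t₂ ht₂ c₁ c₂ hc₁ hc₂ hab
    simp only [hTdef, Set.mem_setOf_eq, smul_eq_mul]
    have h2 := hKconv ht₁ ht₂ hc₁ hc₂ hab
    have heq : c₁ • (x + t₁ • v) + c₂ • (x + t₂ • v)
        = (c₁ + c₂) • x + (c₁ * t₁ + c₂ * t₂) • v := by module
    rw [heq, hab, one_smul] at h2
    exact h2
  have hTclosed : IsClosed T :=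
    hKclosed.preimage (continuous_const.add (continuous_id.smul continuous_const))
  have h0T : (0:ℝ) ∈ T := by
    simp only [hTdef, Set.mem_setOf_eq, zero_smul, add_zero]
    exact hxK
  have htpT : tp ∉ T := htp
  have hbdd : BddAbove T := by
    refine ⟨tp, fun t htT => ?_⟩
    by_contra h
    push_neg at h
    exact htpT (hTconv.ordConnected.out h0T htT ⟨htp0, h.le⟩)
  have htmT : -tm ∉ T := by
    intro h
    apply htm
    have heq : x + tm • (-v) = x + (-tm) • v := by module
    rw [heq]; exact h
  have hbddb : BddBelow T := by
    refine ⟨-tm, fun t htT => ?_⟩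
    by_contra h
    push_neg at h
    exact htmT (hTconv.ordConnected.out htT h0T ⟨h.le, by linarith⟩)
  have hTne : T.Nonempty := ⟨0, h0T⟩
  set b := sSup T with hbdef
  set a := sInf T with hadef
  have hbT : b ∈ T := hTclosed.csSup_mem hTne hbdd
  have haT : a ∈ T := hTclosed.csInf_mem hTne hbddb
  have ha0 : a ≤ 0 := csInf_le hbddb h0T
  have hb0 : 0 ≤ b := le_csSup hbdd h0T
  have hIccT : Icc a b ⊆ T := hTconv.ordConnected.out haT hbT
  set y := x + a • v with hydef
  set z := x + b • v with hzdef
  have hyK : y ∈ K := haT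
  have hzK : z ∈ K := hbT
  have hyΩ₀ : y ∉ Ω₀ := by
    intro hmem
    obtain ⟨ε, hε, hball⟩ := Metric.isOpen_iff.mp h0open y hmem
    set δ := ε / (2 * (‖v‖ + 1)) with hδdef
    have hδ : 0 < δ := by positivity
    have hmem2 : x + (a - δ) • v ∈ Ω₀ := by
      apply hball
      rw [Metric.mem_ball, dist_eq_norm]
      have heq : x + (a - δ) • v - y = (-δ) • v := by rw [hydef]; module
      rw [heq, norm_smul, Real.norm_eq_abs, abs_neg, abs_of_pos hδ]
      have hv1 : (0:ℝ) < ‖v‖ + 1 := by positivity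
      have hcalc : δ * (‖v‖ + 1) = ε / 2 := by
        rw [hδdef]; field_simp
      nlinarith [norm_nonneg v]
    have h3 : a - δ ∈ T := subset_closure hmem2
    have h4 := csInf_le hbddb h3
    rw [← hadef] at h4
    linarith
  have hzΩ₀ : z ∉ Ω₀ := by
    intro hmem
    obtain ⟨ε, hε, hball⟩ := Metric.isOpen_iff.mp h0open z hmem
    set δ := ε / (2 * (‖v‖ + 1)) with hδdef
    have hδ : 0 < δ := by positivity
    have hmem2 : x + (b + δ) • v ∈ Ω₀ := by
      apply hball
      rw [Metric.mem_ball, dist_eq_norm]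
      have heq : x + (b + δ) • v - z = δ • v := by rw [hzdef]; module
      rw [heq, norm_smul, Real.norm_eq_abs, abs_of_pos hδ]
      have hv1 : (0:ℝ) < ‖v‖ + 1 := by positivity
      have hcalc : δ * (‖v‖ + 1) = ε / 2 := by
        rw [hδdef]; field_simp
      nlinarith [norm_nonneg v]
    have h3 : b + δ ∈ T := subset_closure hmem2
    have h4 := le_csSup hbdd h3
    rw [← hbdef] at h4
    linarith
  have hseg : segment ℝ y z = (fun θ : ℝ => y + θ • (z - y)) '' Icc (0:ℝ) 1 :=
    segment_eq_image' ℝ y z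
  have hsub : segment ℝ y z ⊆ closure Ω₀ \ Ω₁ := by
    rw [hseg]
    rintro q ⟨θ, ⟨hθ0, hθ1⟩, rfl⟩
    show y + θ • (z - y) ∈ closure Ω₀ \ Ω₁
    have heq : y + θ • (z - y) = x + (a + θ * (b - a)) • v := by
      rw [hydef, hzdef]; module
    rw [heq]
    have hab : a ≤ b := ha0.trans hb0
    have htT : a + θ * (b - a) ∈ T := hIccT ⟨by nlinarith, by nlinarith⟩
    exact ⟨htT, hmiss _⟩
  have hxseg : x ∈ segment ℝ y z := by
    rcases eq_or_lt_of_le (ha0.trans hb0) with hab | hab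
    · have ha' : a = 0 := le_antisymm ha0 (hab ▸ hb0)
      have hb' : b = 0 := hab ▸ ha'
      have hy' : y = x := by rw [hydef, ha', zero_smul, add_zero]
      have hz' : z = x := by rw [hzdef, hb', zero_smul, add_zero]
      rw [hy', hz']
      exact left_mem_segment ℝ x x
    · rw [hseg]
      refine ⟨(0 - a) / (b - a),
        ⟨div_nonneg (by linarith) (by linarith),
         by rw [div_le_one (by linarith)]; linarith⟩, ?_⟩
      show y + ((0 - a) / (b - a)) • (z - y) = x
      have heq : y + ((0 - a) / (b - a)) • (z - y)
          = x + (a + ((0 - a) / (b - a)) * (b - a)) • v := by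
        rw [hydef, hzdef]; module
      rw [heq, div_mul_cancel₀ _ (by linarith : b - a ≠ 0)]
      norm_num
  refine ⟨y, z, ?_, ?_, hxseg, hsub⟩
  · rw [h0open.frontier_eq]; exact ⟨hyK, hyΩ₀⟩
  · rw [h0open.frontier_eq]; exact ⟨hzK, hzΩ₀⟩
end
end

section
/- Assume the open convex sets Ω₀ and Ω₁ satisfy the strict convexity condition; in the case d = 2 assume additionally the cone condition. Then for every x ∈ Ω there exists a function φ ∈ A(I) such that ⟨φ⟩_I = x. (In fact φ may be taken to be a two-valued step function whose values are the endpoints of a segment in Ω through x.) -/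
noncomputable section

/-- The average `⟨φ⟩_{(a,b)}` of a function over the interval `(a,b)`. -/
noncomputable def intervalAvg {d : ℕ} (a b : ℝ) (φ : ℝ → EuclideanSpace ℝ (Fin d)) :
    EuclideanSpace ℝ (Fin d) :=
  (b - a)⁻¹ • ∫ t in Set.Ioo a b, φ t
/-- The class `A`: summable functions on `(a,b)` with values in `∂Ω₀` all of whose
subinterval averages avoid `Ω₁`. -/
def MemClassA {d : ℕ} (Ω₀ Ω₁ : Set (EuclideanSpace ℝ (Fin d))) (a b : ℝ)
    (φ : ℝ → EuclideanSpace ℝ (Fin d)) : Prop :=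
  MeasureTheory.IntegrableOn φ (Set.Ioo a b) ∧
  (∀ t ∈ Set.Ioo a b, φ t ∈ frontier Ω₀) ∧
  ∀ c e : ℝ, a ≤ c → c < e → e ≤ b → intervalAvg c e φ ∉ Ω₁


open Set MeasureTheory Filter Topology


section Geometry

variable {E : Type*} [NormedAddCommGroup E] [NormedSpace ℝ E]

/-- If a closed convex set contains a ray from `q` in direction `v`, it contains the
parallel ray from every of its points. -/
lemma ray_transfer {C : Set E} (hconv : Convex ℝ C) (hcl : IsClosed C) {q v : E}
    (hq : ∀ t : ℝ, 0 ≤ t → q + t • v ∈ C) {p : E} (hp : p ∈ C) :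
    ∀ t : ℝ, 0 ≤ t → p + t • v ∈ C := by
  intro t ht
  have key : ∀ n : ℕ, (1 - ((n : ℝ) + 1)⁻¹) • p + ((n : ℝ) + 1)⁻¹ • q + t • v ∈ C := by
    intro n
    have hn0 : (0 : ℝ) < (n : ℝ) + 1 := by positivity
    have hr : (0 : ℝ) < ((n : ℝ) + 1)⁻¹ := by positivity
    have hr1 : ((n : ℝ) + 1)⁻¹ ≤ 1 := by
      rw [inv_le_one_iff₀]; right; linarith
    have hqC : q + (t * ((n : ℝ) + 1)) • v ∈ C := hq _ (by positivity)
    have hcomb := hconv hp hqC (a := 1 - ((n : ℝ) + 1)⁻¹) (b := ((n : ℝ) + 1)⁻¹)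
      (by linarith) hr.le (by ring)
    have hts : ((n : ℝ) + 1)⁻¹ * (t * ((n : ℝ) + 1)) = t := by field_simp
    rw [smul_add, smul_smul, hts] at hcomb
    convert hcomb using 1
    abel
  have htend : Tendsto (fun n : ℕ => (1 - ((n : ℝ) + 1)⁻¹) • p + ((n : ℝ) + 1)⁻¹ • q + t • v)
      atTop (𝓝 (p + t • v)) := by
    have h1 : Tendsto (fun n : ℕ => ((n : ℝ) + 1)⁻¹) atTop (𝓝 0) := by
      simpa [one_div] using tendsto_one_div_add_atTop_nhds_zero_nat (𝕜 := ℝ)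
    have h2 : Tendsto (fun n : ℕ => 1 - ((n : ℝ) + 1)⁻¹) atTop (𝓝 (1 - 0)) :=
      (tendsto_const_nhds (x := (1 : ℝ))).sub h1
    have h3 := ((h2.smul_const p).add (h1.smul_const q)).add (tendsto_const_nhds (x := t • v))
    simpa using h3
  exact hcl.mem_of_tendsto htend (Eventually.of_forall key)

/-- A proper closed strictly convex set contains no full line. -/
lemma no_line {C : Set E} (hconv : Convex ℝ C) (hcl : IsClosed C)
    (hsc : StrictConvex ℝ C) (hproper : C ≠ univ) {v : E} (hv : v ≠ 0)
    {p : E} (hp : p ∈ C) (hpr : ∀ t : ℝ, 0 ≤ t → p + t • v ∈ C)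
    {q : E} (hq : q ∈ C) (hqr : ∀ t : ℝ, 0 ≤ t → q + t • (-v) ∈ C) : False := by
  have htrans : ∀ w ∈ C, ∀ t : ℝ, w + t • v ∈ C := by
    intro w hw t
    rcases le_or_gt 0 t with h | h
    · exact ray_transfer hconv hcl hpr hw t h
    · have := ray_transfer hconv hcl hqr hw (-t) (by linarith)
      simpa [smul_neg] using this
  haveI : PreconnectedSpace E := ⟨(convex_univ : Convex ℝ (univ : Set E)).isPreconnected⟩
  have hfr : (frontier C).Nonempty := by
    by_contra h
    rw [not_nonempty_iff_eq_empty] at h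
    have hopen : IsOpen C := by
      rw [← subset_interior_iff_isOpen]
      intro z hz
      by_contra hz'
      have : z ∈ frontier C := ⟨subset_closure hz, hz'⟩
      simp [h] at this
    rcases isClopen_iff.mp ⟨hcl, hopen⟩ with h' | h'
    · exact absurd h' (Nonempty.ne_empty ⟨p, hp⟩)
    · exact hproper h'
  obtain ⟨z, hz⟩ := hfr
  have hzC : z ∈ C := by rw [← hcl.closure_eq]; exact hz.1
  have hzint : z ∉ interior C := hz.2
  have hz2 : z + v ∈ C := by simpa using htrans z hzC 1
  have hne : z ≠ z + v := by simp [hv]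
  have hmid : z + (2⁻¹ : ℝ) • v ∈ interior C := by
    have := hsc hzC hz2 hne (by norm_num : (0:ℝ) < 2⁻¹) (by norm_num : (0:ℝ) < 2⁻¹) (by norm_num)
    convert this using 1
    rw [smul_add]
    module
  obtain ⟨ε, hε, hball⟩ := Metric.isOpen_iff.mp isOpen_interior _ hmid
  apply hzint
  have hsub : Metric.ball z ε ⊆ C := by
    intro u hu
    have h1 : u + (2⁻¹ : ℝ) • v ∈ Metric.ball (z + (2⁻¹ : ℝ) • v) ε := by
      simpa [Metric.mem_ball, dist_add_right] using hu
    have h2 : u + (2⁻¹ : ℝ) • v ∈ C := interior_subset (hball h1)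
    have := htrans _ h2 (-2⁻¹)
    have heq : u + (2⁻¹ : ℝ) • v + (-2⁻¹ : ℝ) • v = u := by module
    rwa [heq] at this
  exact mem_interior.mpr ⟨Metric.ball z ε, hsub, Metric.isOpen_ball, Metric.mem_ball_self hε⟩

/-- A ray from an interior point staying in the closure stays in the open set. -/
lemma ray_mem_open {Ω : Set E} (hop : IsOpen Ω) (hconv : Convex ℝ Ω) {x v : E} (hx : x ∈ Ω)
    (hray : ∀ t : ℝ, 0 ≤ t → x + t • v ∈ closure Ω) : ∀ t : ℝ, 0 ≤ t → x + t • v ∈ Ω := by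
  intro t ht
  rcases eq_or_lt_of_le ht with rfl | ht'
  · simpa using hx
  · have h2 : x + (2 * t) • v ∈ closure Ω := hray _ (by linarith)
    have hxint : x ∈ interior Ω := by rwa [hop.interior_eq]
    have hmemb : x + t • v ∈ openSegment ℝ x (x + (2 * t) • v) := by
      refine ⟨2⁻¹, 2⁻¹, by norm_num, by norm_num, by norm_num, ?_⟩
      rw [smul_add]
      module
    have := hconv.openSegment_interior_closure_subset_interior hxint h2 hmemb
    rwa [hop.interior_eq] at this

end Geometry


section Chord
variable {E : Type*} [NormedAddCommGroup E] [NormedSpace ℝ E]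

lemma chord_of_dir {Ω₀ Ω₁ : Set E} (h0open : IsOpen Ω₀)
    {x u : E} (hu : u ≠ 0) (hx : x ∈ Ω₀)
    (hBA : BddAbove {t : ℝ | x + t • u ∈ closure Ω₀})
    (hBB : BddBelow {t : ℝ | x + t • u ∈ closure Ω₀})
    (hmiss : ∀ t : ℝ, x + t • u ∉ Ω₁) :
    ∃ p q : E, p ∈ frontier Ω₀ ∧ q ∈ frontier Ω₀ ∧ x ∈ segment ℝ p q ∧
      ∀ z ∈ segment ℝ p q, z ∉ Ω₁ := by
  set S := {t : ℝ | x + t • u ∈ closure Ω₀} with hSdef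
  have hS0 : (0 : ℝ) ∈ S := by
    show x + (0:ℝ) • u ∈ closure Ω₀
    simpa using subset_closure hx
  have hSne : S.Nonempty := ⟨0, hS0⟩
  have hScl : IsClosed S := by
    have hcont : Continuous fun t : ℝ => x + t • u :=
      continuous_const.add (continuous_id.smul continuous_const)
    exact IsClosed.preimage hcont isClosed_closure
  have htp : sInf S ∈ S := hScl.csInf_mem hSne hBB
  have htq : sSup S ∈ S := hScl.csSup_mem hSne hBA
  have htp0 : sInf S ≤ 0 := csInf_le hBB hS0
  have htq0 : 0 ≤ sSup S := le_csSup hBA hS0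
  have hun : 0 < ‖u‖ := norm_pos_iff.mpr hu
  have hpfr : x + sInf S • u ∉ Ω₀ := by
    intro hmem
    obtain ⟨ε, hε, hball⟩ := Metric.isOpen_iff.mp h0open _ hmem
    have hδ : 0 < ε / (2 * ‖u‖) := by positivity
    have hmem2 : sInf S - ε / (2 * ‖u‖) ∈ S := by
      show x + _ • u ∈ closure Ω₀
      apply subset_closure; apply hball
      rw [Metric.mem_ball, dist_add_left, dist_eq_norm, ← sub_smul]
      have : sInf S - ε / (2 * ‖u‖) - sInf S = -(ε / (2 * ‖u‖)) := by ring
      rw [this, norm_smul, norm_neg]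
      simp only [Real.norm_eq_abs, abs_of_pos hδ]
      have hne : ‖u‖ ≠ 0 := ne_of_gt hun
      have h2 : ε / (2 * ‖u‖) * ‖u‖ = ε / 2 := by field_simp; try ring
      have h2' : ‖u‖ * (ε / (2 * ‖u‖)) = ε / 2 := by rw [mul_comm]; exact h2
      linarith [h2, h2']
    have := csInf_le hBB hmem2
    linarith
  have hqfr : x + sSup S • u ∉ Ω₀ := by
    intro hmem
    obtain ⟨ε, hε, hball⟩ := Metric.isOpen_iff.mp h0open _ hmem
    have hδ : 0 < ε / (2 * ‖u‖) := by positivity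
    have hmem2 : sSup S + ε / (2 * ‖u‖) ∈ S := by
      show x + _ • u ∈ closure Ω₀
      apply subset_closure; apply hball
      rw [Metric.mem_ball, dist_add_left, dist_eq_norm, ← sub_smul]
      have : sSup S + ε / (2 * ‖u‖) - sSup S = ε / (2 * ‖u‖) := by ring
      rw [this, norm_smul]
      simp only [Real.norm_eq_abs, abs_of_pos hδ]
      have hne : ‖u‖ ≠ 0 := ne_of_gt hun
      have h2 : ε / (2 * ‖u‖) * ‖u‖ = ε / 2 := by field_simp; try ring
      have h2' : ‖u‖ * (ε / (2 * ‖u‖)) = ε / 2 := by rw [mul_comm]; exact h2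
      linarith [h2, h2']
    have := le_csSup hBA hmem2
    linarith
  have htpneg : sInf S < 0 := by
    rcases lt_or_eq_of_le htp0 with h | h
    · exact h
    · exfalso; apply hpfr; rw [h]; simpa using hx
  have htqpos : 0 < sSup S := by
    rcases lt_or_eq_of_le htq0 with h | h
    · exact h
    · exfalso; apply hqfr; rw [← h]; simpa using hx
  have hden : 0 < sSup S - sInf S := by linarith
  refine ⟨x + sInf S • u, x + sSup S • u, ?_, ?_, ?_, ?_⟩
  · rw [frontier, h0open.interior_eq]; exact ⟨htp, hpfr⟩
  · rw [frontier, h0open.interior_eq]; exact ⟨htq, hqfr⟩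
  · refine ⟨sSup S / (sSup S - sInf S), -sInf S / (sSup S - sInf S),
      div_nonneg (by linarith) (by linarith), div_nonneg (by linarith) (by linarith),
      by rw [← add_div, div_eq_one_iff_eq (ne_of_gt hden)]; ring, ?_⟩
    have hexp : ∀ c d : ℝ, c • (x + sInf S • u) + d • (x + sSup S • u)
        = (c + d) • x + (c * sInf S + d * sSup S) • u := by
      intro c d; module
    rw [hexp]
    have h1 : sSup S / (sSup S - sInf S) + -sInf S / (sSup S - sInf S) = 1 := by
      rw [← add_div, div_eq_one_iff_eq (ne_of_gt hden)]; ring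
    have h2 : sSup S / (sSup S - sInf S) * sInf S + -sInf S / (sSup S - sInf S) * sSup S = 0 := by
      field_simp; ring
    rw [h1, h2]; simp
  · rintro z ⟨c, d, hc, hd, hsum, rfl⟩
    have hexp : c • (x + sInf S • u) + d • (x + sSup S • u)
        = (c + d) • x + (c * sInf S + d * sSup S) • u := by module
    rw [hexp, hsum, one_smul]
    exact hmiss _

end Chord

section Step

variable {d : ℕ}

lemma step_integrableOn (p q : EuclideanSpace ℝ (Fin d)) (m : ℝ) {s : Set ℝ}
    (hs : MeasurableSet s) (hfin : volume s < ⊤) :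
    IntegrableOn (fun t => if t < m then p else q) s := by
  have h1 : IntegrableOn (fun t => if t < m then p else q) (s ∩ Iio m) := by
    have heq : EqOn (fun t => if t < m then p else q) (fun _ => p) (s ∩ Iio m) := by
      intro t ht
      have h : t < m := ht.2
      simp [h]
    rw [integrableOn_congr_fun heq (hs.inter measurableSet_Iio)]
    exact (integrableOn_const_iff enorm_ne_top).mpr (Or.inr (lt_of_le_of_lt (measure_mono inter_subset_left) hfin))
  have h2 : IntegrableOn (fun t => if t < m then p else q) (s ∩ Ici m) := by
    have heq : EqOn (fun t => if t < m then p else q) (fun _ => q) (s ∩ Ici m) := by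
      intro t ht
      have h : ¬ t < m := not_lt.mpr ht.2
      simp [h]
    rw [integrableOn_congr_fun heq (hs.inter measurableSet_Ici)]
    exact (integrableOn_const_iff enorm_ne_top).mpr (Or.inr (lt_of_le_of_lt (measure_mono inter_subset_left) hfin))
  have : s = (s ∩ Iio m) ∪ (s ∩ Ici m) := by
    rw [← inter_union_distrib_left, Iio_union_Ici, inter_univ]
  rw [this]
  exact h1.union h2

lemma step_avg (p q : EuclideanSpace ℝ (Fin d)) {m c e : ℝ} (hce : c < e) :
    intervalAvg c e (fun t => if t < m then p else q) =
      if m ≤ c then q else if e ≤ m then p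
      else (e - c)⁻¹ • ((m - c) • p + (e - m) • q) := by
  have hec : (0:ℝ) < e - c := by linarith
  by_cases h1 : m ≤ c
  · rw [if_pos h1]
    rw [intervalAvg]
    rw [setIntegral_congr_fun measurableSet_Ioo
      (g := fun _ => q) (fun t ht => if_neg (not_lt.mpr (le_trans h1 ht.1.le)))]
    rw [setIntegral_const, Real.volume_real_Ioo_of_le (by linarith), smul_smul,
      inv_mul_cancel₀ (ne_of_gt hec), one_smul]
  · rw [if_neg h1]
    push_neg at h1
    by_cases h2 : e ≤ m
    · rw [if_pos h2]
      rw [intervalAvg]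
      rw [setIntegral_congr_fun measurableSet_Ioo
        (g := fun _ => p) (fun t ht => if_pos (lt_of_lt_of_le ht.2 h2))]
      rw [setIntegral_const, Real.volume_real_Ioo_of_le (by linarith), smul_smul,
        inv_mul_cancel₀ (ne_of_gt hec), one_smul]
    · rw [if_neg h2]
      push_neg at h2
      rw [intervalAvg]
      have hsplit : Ioo c e = Ioo c m ∪ Ico m e := by
        ext t
        simp only [mem_Ioo, mem_Ico, mem_union]
        constructor
        · rintro ⟨ht1, ht2⟩
          rcases lt_or_ge t m with h | h
          · exact Or.inl ⟨ht1, h⟩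
          · exact Or.inr ⟨h, ht2⟩
        · rintro (⟨ht1, ht2⟩ | ⟨ht1, ht2⟩)
          · exact ⟨ht1, lt_trans ht2 h2⟩
          · exact ⟨lt_of_lt_of_le h1 ht1, ht2⟩
      have hdisj : Disjoint (Ioo c m) (Ico m e) := by
        rw [Set.disjoint_left]
        rintro t ⟨_, h3⟩ ⟨h4, _⟩
        exact absurd h4 (not_le.mpr h3)
      have hint1 : IntegrableOn (fun t => if t < m then p else q) (Ioo c m) :=
        step_integrableOn p q m measurableSet_Ioo (by rw [Real.volume_Ioo]; exact ENNReal.ofReal_lt_top)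
      have hint2 : IntegrableOn (fun t => if t < m then p else q) (Ico m e) :=
        step_integrableOn p q m measurableSet_Ico (by rw [Real.volume_Ico]; exact ENNReal.ofReal_lt_top)
      rw [hsplit, setIntegral_union hdisj measurableSet_Ico hint1 hint2]
      rw [setIntegral_congr_fun measurableSet_Ioo (g := fun _ => p) (fun t ht => if_pos ht.2)]
      rw [setIntegral_congr_fun measurableSet_Ico
        (g := fun _ => q) (fun t ht => if_neg (not_lt.mpr ht.1))]
      rw [setIntegral_const, setIntegral_const, Real.volume_real_Ioo_of_le (by linarith),
        Real.volume_real_Ico_of_le (by linarith)]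

end Step

section MainChord

variable {d : ℕ}

set_option maxHeartbeats 1000000 in
lemma exists_chord (hd : 2 ≤ d) (Ω₀ Ω₁ : Set (EuclideanSpace ℝ (Fin d)))
    (h0open : IsOpen Ω₀) (h0conv : Convex ℝ Ω₀) (h0ne : Ω₀.Nonempty)
    (h0proper : Ω₀ ≠ Set.univ)
    (h1open : IsOpen Ω₁) (h1conv : Convex ℝ Ω₁) (h1ne : Ω₁.Nonempty)
    (hsc0 : StrictConvex ℝ (closure Ω₀)) (hsc1 : StrictConvex ℝ (closure Ω₁))
    (hcone : d = 2 → ConeCondition Ω₀ Ω₁)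
    {x : EuclideanSpace ℝ (Fin d)} (hxcl : x ∈ closure Ω₀) (hxout : x ∉ Ω₁) :
    ∃ p q : EuclideanSpace ℝ (Fin d), p ∈ frontier Ω₀ ∧ q ∈ frontier Ω₀ ∧
      x ∈ segment ℝ p q ∧ ∀ z ∈ segment ℝ p q, z ∉ Ω₁ := by
  by_cases hx0 : x ∈ Ω₀
  case neg =>
    refine ⟨x, x, ?_, ?_, left_mem_segment ℝ x x, ?_⟩
    · rw [frontier, h0open.interior_eq]; exact ⟨hxcl, hx0⟩
    · rw [frontier, h0open.interior_eq]; exact ⟨hxcl, hx0⟩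
    · intro z hz
      rw [segment_same] at hz
      rw [hz]
      exact hxout
  case pos =>
  have hC0conv : Convex ℝ (closure Ω₀) := h0conv.closure
  have hC0cl : IsClosed (closure Ω₀) := isClosed_closure
  have hC0proper : closure Ω₀ ≠ Set.univ := by
    intro h
    apply h0proper
    obtain ⟨x₀, hx₀⟩ := h0ne
    rw [Set.eq_univ_iff_forall]
    intro z
    have hz' : (2:ℝ) • z - x₀ ∈ closure Ω₀ := by rw [h]; trivial
    have hx₀i : x₀ ∈ interior Ω₀ := by rwa [h0open.interior_eq]
    have hmem := h0conv.combo_interior_closure_mem_interior hx₀i hz'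
      (by norm_num : (0:ℝ) < 2⁻¹) (by norm_num : (0:ℝ) ≤ 2⁻¹) (by norm_num)
    have heq : (2⁻¹:ℝ) • x₀ + (2⁻¹:ℝ) • ((2:ℝ) • z - x₀) = z := by module
    rw [heq, h0open.interior_eq] at hmem
    exact hmem
  obtain ⟨f, hf⟩ := geometric_hahn_banach_open_point h1conv h1open hxout
  obtain ⟨w₀, hw₀⟩ := h1ne
  have hfne : ∃ w, f w ≠ 0 := by
    by_contra h
    push_neg at h
    have := hf w₀ hw₀
    rw [h w₀, h x] at this
    exact lt_irrefl 0 this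
  obtain ⟨w₁, hw₁⟩ := hfne
  have hfn : f ((f w₁)⁻¹ • w₁) = 1 := by
    rw [f.map_smul, smul_eq_mul, inv_mul_cancel₀ hw₁]
  set n : EuclideanSpace ℝ (Fin d) := (f w₁)⁻¹ • w₁ with hn_def
  have hn0 : n ≠ 0 := by
    intro h
    rw [h, map_zero] at hfn
    norm_num at hfn
  -- parameter set facts
  have hSmem : ∀ w : EuclideanSpace ℝ (Fin d),
      (0:ℝ) ∈ {t : ℝ | x + t • w ∈ closure Ω₀} := by
    intro w
    show x + (0:ℝ) • w ∈ closure Ω₀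
    simpa using subset_closure hx0
  have hSconv : ∀ w : EuclideanSpace ℝ (Fin d),
      Convex ℝ {t : ℝ | x + t • w ∈ closure Ω₀} := by
    intro w t1 h1 t2 h2 α β hα hβ hsum
    show x + (α • t1 + β • t2) • w ∈ closure Ω₀
    have hcomb := hC0conv h1 h2 hα hβ hsum
    have heq : α • (x + t1 • w) + β • (x + t2 • w)
        = (α + β) • x + (α • t1 + β • t2) • w := by
      simp only [smul_eq_mul]; module
    rw [heq, hsum, one_smul] at hcomb
    exact hcomb
  have hrayC0_of_unbddAbove : ∀ w : EuclideanSpace ℝ (Fin d),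
      ¬ BddAbove {t : ℝ | x + t • w ∈ closure Ω₀} →
      ∀ t : ℝ, 0 ≤ t → x + t • w ∈ closure Ω₀ := by
    intro w hnb t ht
    obtain ⟨t', ht', htt'⟩ := not_bddAbove_iff.mp hnb t
    have hseg : t ∈ segment ℝ (0:ℝ) t' := by
      rw [segment_eq_Icc (le_trans ht htt'.le)]
      exact ⟨ht, htt'.le⟩
    exact (hSconv w).segment_subset (hSmem w) ht' hseg
  have hrayneg_of_unbddBelow : ∀ w : EuclideanSpace ℝ (Fin d),
      ¬ BddBelow {t : ℝ | x + t • w ∈ closure Ω₀} →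
      ∀ t : ℝ, 0 ≤ t → x + t • (-w) ∈ closure Ω₀ := by
    intro w hnb t ht
    obtain ⟨t', ht', htt'⟩ := not_bddBelow_iff.mp hnb (-t)
    have h1 : x + (-t) • w ∈ closure Ω₀ := by
      have hseg : (-t) ∈ segment ℝ t' (0:ℝ) := by
        rw [segment_eq_Icc (by linarith : t' ≤ 0)]
        exact ⟨htt'.le, by linarith⟩
      exact (hSconv w).segment_subset ht' (hSmem w) hseg
    simpa [smul_neg, neg_smul] using h1
  have hnotboth : ∀ w : EuclideanSpace ℝ (Fin d), w ≠ 0 →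
      (∀ t:ℝ, 0 ≤ t → x + t • w ∈ closure Ω₀) →
      (∀ t:ℝ, 0 ≤ t → x + t • (-w) ∈ closure Ω₀) → False := by
    intro w hw h1 h2
    exact no_line hC0conv hC0cl hsc0 hC0proper hw (subset_closure hx0) h1 (subset_closure hx0) h2
  have hker : ∃ v : EuclideanSpace ℝ (Fin d), f v = 0 ∧ v ≠ 0 := by
    have hne : LinearMap.ker (f : EuclideanSpace ℝ (Fin d) →ₗ[ℝ] ℝ) ≠ ⊥ := by
      intro h
      have hinj : Function.Injective (f : EuclideanSpace ℝ (Fin d) →ₗ[ℝ] ℝ) :=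
        LinearMap.ker_eq_bot.mp h
      have hle := LinearMap.finrank_le_finrank_of_injective hinj
      have hE : Module.finrank ℝ (EuclideanSpace ℝ (Fin d)) = d := by
        simp [finrank_euclideanSpace]
      rw [hE, Module.finrank_self] at hle
      omega
    obtain ⟨v, hv, hv0⟩ := (Submodule.ne_bot_iff _).mp hne
    refine ⟨v, ?_, hv0⟩
    simpa using LinearMap.mem_ker.mp hv
  by_cases hd2 : d = 2
  case neg =>
    -- dimension ≥ 3 : connectivity argument
    have hd3 : 3 ≤ d := by omega
    set V := LinearMap.ker (f : EuclideanSpace ℝ (Fin d) →ₗ[ℝ] ℝ) with hV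
    have hV2 : 2 ≤ Module.finrank ℝ V := by
      have h1 := LinearMap.finrank_range_add_finrank_ker (f : EuclideanSpace ℝ (Fin d) →ₗ[ℝ] ℝ)
      rw [← hV] at h1
      have h2 : Module.finrank ℝ (LinearMap.range (f : EuclideanSpace ℝ (Fin d) →ₗ[ℝ] ℝ)) ≤ 1 := by
        have := Submodule.finrank_le (LinearMap.range (f : EuclideanSpace ℝ (Fin d) →ₗ[ℝ] ℝ))
        rwa [Module.finrank_self] at this
      have hE : Module.finrank ℝ (EuclideanSpace ℝ (Fin d)) = d := by
        simp [finrank_euclideanSpace]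
      rw [hE] at h1
      omega
    have hrank : (1 : Cardinal) < Module.rank ℝ V := by
      have h2 : ((2 : ℕ) : Cardinal) ≤ Module.rank ℝ V := by
        rw [← Module.finrank_eq_rank ℝ ↥V]
        exact_mod_cast hV2
      refine lt_of_lt_of_le ?_ h2
      exact_mod_cast (by norm_num : (1:ℕ) < 2)
    have hconn0 : IsConnected ({(0 : V)}ᶜ : Set V) :=
      isConnected_compl_singleton_of_one_lt_rank hrank 0
    have hconn : IsConnected {w : EuclideanSpace ℝ (Fin d) | w ∈ V ∧ w ≠ 0} := by
      have himg : (Subtype.val '' ({(0 : V)}ᶜ : Set V))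
          = {w : EuclideanSpace ℝ (Fin d) | w ∈ V ∧ w ≠ 0} := by
        ext w
        constructor
        · rintro ⟨⟨w', hw'⟩, hne, rfl⟩
          refine ⟨hw', ?_⟩
          intro h0
          apply hne
          simp only [Set.mem_compl_iff, Set.mem_singleton_iff] at *
          exact Subtype.ext h0
        · rintro ⟨hwV, hw0⟩
          refine ⟨⟨w, hwV⟩, ?_, rfl⟩
          simp only [Set.mem_compl_iff, Set.mem_singleton_iff]
          intro h
          apply hw0
          exact congrArg Subtype.val h
      rw [← himg]
      exact hconn0.image _ continuous_subtype_val.continuousOn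
    set T := {w : EuclideanSpace ℝ (Fin d) | ∀ t : ℝ, 0 ≤ t → x + t • w ∈ closure Ω₀} with hT
    have hTcl : IsClosed T := by
      have hrw : T = ⋂ t ∈ Set.Ici (0:ℝ), {w : EuclideanSpace ℝ (Fin d) | x + t • w ∈ closure Ω₀} :=
        Set.ext fun w => by simp only [hT, Set.mem_setOf_eq, Set.mem_iInter, Set.mem_Ici]
      rw [hrw]
      refine isClosed_biInter fun t ht => ?_
      exact IsClosed.preimage (continuous_const.add (continuous_id.const_smul t)) isClosed_closure
    have hTnegcl : IsClosed ((fun w : EuclideanSpace ℝ (Fin d) => -w) ⁻¹' T) :=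
      hTcl.preimage continuous_neg
    have hgood : ∃ u : EuclideanSpace ℝ (Fin d), u ∈ V ∧ u ≠ 0 ∧ u ∉ T ∧ -u ∉ T := by
      by_contra hcon
      push_neg at hcon
      have hcover : {w : EuclideanSpace ℝ (Fin d) | w ∈ V ∧ w ≠ 0}
          ⊆ T ∪ ((fun w => -w) ⁻¹' T) := by
        rintro w ⟨hwV, hw0⟩
        by_cases h : w ∈ T
        · exact Or.inl h
        · exact Or.inr (hcon w hwV hw0 h)
      obtain ⟨u₀, hu₀V, hu₀0⟩ : ∃ u₀ : EuclideanSpace ℝ (Fin d), u₀ ∈ V ∧ u₀ ≠ 0 := by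
        haveI : Nontrivial V := (Module.finrank_pos_iff (R := ℝ)).mp (by omega)
        obtain ⟨v', hv'⟩ := exists_ne (0 : V)
        exact ⟨v', v'.2, fun h => hv' (Subtype.ext h)⟩
      have hpieces : ({w : EuclideanSpace ℝ (Fin d) | w ∈ V ∧ w ≠ 0} ∩ T).Nonempty ∧
          ({w : EuclideanSpace ℝ (Fin d) | w ∈ V ∧ w ≠ 0} ∩ ((fun w => -w) ⁻¹' T)).Nonempty := by
        have hmemV : -u₀ ∈ V := neg_mem hu₀V
        have hne' : -u₀ ≠ 0 := neg_ne_zero.mpr hu₀0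
        by_cases h : u₀ ∈ T
        · exact ⟨⟨u₀, ⟨hu₀V, hu₀0⟩, h⟩, ⟨-u₀, ⟨hmemV, hne'⟩, by simpa using h⟩⟩
        · have h' : -u₀ ∈ T := hcon u₀ hu₀V hu₀0 h
          exact ⟨⟨-u₀, ⟨hmemV, hne'⟩, h'⟩, ⟨u₀, ⟨hu₀V, hu₀0⟩, h'⟩⟩
      obtain ⟨w, hwS, hwT, hwTn⟩ := isPreconnected_closed_iff.mp hconn.isPreconnected
        T ((fun w => -w) ⁻¹' T) hTcl hTnegcl hcover hpieces.1 hpieces.2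
      exact hnotboth w hwS.2 hwT hwTn
    obtain ⟨u, huV, hu0, huT, hunT⟩ := hgood
    have hfu : f u = 0 := by simpa using LinearMap.mem_ker.mp huV
    have hBA : BddAbove {t : ℝ | x + t • u ∈ closure Ω₀} := by
      by_contra hnb
      exact huT (hrayC0_of_unbddAbove u hnb)
    have hBB : BddBelow {t : ℝ | x + t • u ∈ closure Ω₀} := by
      by_contra hnb
      apply hunT
      intro t ht
      simpa using hrayneg_of_unbddBelow u hnb t ht
    have hmiss : ∀ t : ℝ, x + t • u ∉ Ω₁ := by
      intro t hmem
      have := hf _ hmem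
      rw [map_add, f.map_smul, hfu, smul_zero, add_zero] at this
      exact lt_irrefl _ this
    exact chord_of_dir h0open hu0 hx0 hBA hBB hmiss
  case pos =>
    -- dimension 2 : cone condition argument
    obtain ⟨v₀, hv₀f, hv₀0⟩ := hker
    have hcone2 : ConeCondition Ω₀ Ω₁ := hcone hd2
    -- the main construction assuming an unbounded direction in the kernel
    have hmain : ∀ v : EuclideanSpace ℝ (Fin d), f v = 0 → v ≠ 0 →
        (∀ t : ℝ, 0 ≤ t → x + t • v ∈ closure Ω₀) →
        ∃ p q : EuclideanSpace ℝ (Fin d), p ∈ frontier Ω₀ ∧ q ∈ frontier Ω₀ ∧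
          x ∈ segment ℝ p q ∧ ∀ z ∈ segment ℝ p q, z ∉ Ω₁ := by
      intro v hvf hv0 hray
      have hrayΩ : ∀ t : ℝ, 0 ≤ t → x + t • v ∈ Ω₀ := ray_mem_open h0open h0conv hx0 hray
      obtain ⟨y, hy⟩ := hcone2 x v hv0 hrayΩ
      have hyC1 : y ∈ closure Ω₁ := subset_closure (by simpa using hy 0 le_rfl)
      have hC1conv : Convex ℝ (closure Ω₁) := h1conv.closure
      have hC1cl : IsClosed (closure Ω₁) := isClosed_closure
      have hrayC1 : ∀ w ∈ closure Ω₁, ∀ t : ℝ, 0 ≤ t → w + t • v ∈ closure Ω₁ := by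
        intro w hw
        exact ray_transfer hC1conv hC1cl (fun t ht => subset_closure (hy t ht)) hw
      have hC1sub : closure Ω₁ ⊆ {z | f z ≤ f x} := by
        apply closure_minimal
        · intro z hz
          exact (hf z hz).le
        · exact isClosed_le f.continuous continuous_const
      have hC1proper : closure Ω₁ ≠ Set.univ := by
        intro h
        have hmem : x + n ∈ {z : EuclideanSpace ℝ (Fin d) | f z ≤ f x} := hC1sub (by rw [h]; trivial)
        simp only [Set.mem_setOf_eq, map_add, hfn] at hmem
        linarith
      -- the tilted direction has value s under f
      have hfw : ∀ s : ℝ, f (v + s • n) = s := by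
        intro s
        rw [map_add, f.map_smul, hvf, hfn, smul_eq_mul, mul_one, zero_add]
      have hw0 : ∀ s : ℝ, 0 < s → v + s • n ≠ 0 := by
        intro s hs h
        have : f (v + s • n) = 0 := by rw [h, map_zero]
        rw [hfw s] at this
        linarith
      -- (i) : forward boundedness for every positive tilt
      have hBA_s : ∀ s : ℝ, 0 < s → BddAbove {t : ℝ | x + t • (v + s • n) ∈ closure Ω₀} := by
        intro s hs
        by_contra hnb
        have hrayC := hrayC0_of_unbddAbove _ hnb
        have hrayΩ' : ∀ t : ℝ, 0 ≤ t → x + t • (v + s • n) ∈ Ω₀ :=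
          ray_mem_open h0open h0conv hx0 hrayC
        obtain ⟨y', hy'⟩ := hcone2 x _ (hw0 s hs) hrayΩ'
        have ht₀ : (0:ℝ) ≤ max 0 ((f x - f y') / s) + 1 := by
          have := le_max_left 0 ((f x - f y') / s)
          linarith
        have hmem := hf _ (hy' _ ht₀)
        rw [map_add, f.map_smul, hfw s, smul_eq_mul] at hmem
        have h1 : (f x - f y') / s ≤ max 0 ((f x - f y') / s) := le_max_right _ _
        have h2 : f x - f y' ≤ (max 0 ((f x - f y') / s)) * s := by
          rw [div_le_iff₀ hs] at h1
          exact h1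
        have h3 : (max 0 ((f x - f y') / s) + 1) * s
            = (max 0 ((f x - f y') / s)) * s + s := by ring
        rw [h3] at hmem
        linarith
      -- (ii) : backward boundedness for all sufficiently small tilts
      have hBB_s : ∃ s₀ : ℝ, 0 < s₀ ∧ ∀ s : ℝ, 0 < s → s < s₀ →
          BddBelow {t : ℝ | x + t • (v + s • n) ∈ closure Ω₀} := by
        by_contra hno
        push_neg at hno
        have hseq : ∀ k : ℕ, ∃ s : ℝ, 0 < s ∧ s < ((k : ℝ) + 1)⁻¹ ∧
            ∀ t : ℝ, 0 ≤ t → x + t • (-(v + s • n)) ∈ closure Ω₀ := by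
          intro k
          obtain ⟨s, hs1, hs2, hnb⟩ := hno ((k : ℝ) + 1)⁻¹ (by positivity)
          exact ⟨s, hs1, hs2, hrayneg_of_unbddBelow _ hnb⟩
        choose sf hs1 hs2 hs3 using hseq
        have hsk : Filter.Tendsto sf Filter.atTop (nhds 0) := by
          apply squeeze_zero (fun k => (hs1 k).le) (fun k => (hs2 k).le)
          simpa [one_div] using tendsto_one_div_add_atTop_nhds_zero_nat (𝕜 := ℝ)
        have hlimray : ∀ t : ℝ, 0 ≤ t → x + t • (-v) ∈ closure Ω₀ := by
          intro t ht
          have hcont : Continuous fun s : ℝ => x + t • (-(v + s • n)) := by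
            apply continuous_const.add
            apply Continuous.fun_const_smul
            apply Continuous.neg
            exact continuous_const.add (continuous_id.smul continuous_const)
          have htend : Filter.Tendsto (fun k : ℕ => x + t • (-(v + sf k • n)))
              Filter.atTop (nhds (x + t • (-(v + (0:ℝ) • n)))) :=
            (hcont.tendsto _).comp hsk
          have htend' : Filter.Tendsto (fun k : ℕ => x + t • (-(v + sf k • n)))
              Filter.atTop (nhds (x + t • (-v))) := by
            simpa using htend
          exact hC0cl.mem_of_tendsto htend' (Filter.Eventually.of_forall fun k => hs3 k t ht)
        exact hnotboth v hv0 hray hlimray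
      obtain ⟨s₀, hs₀, hBB_s⟩ := hBB_s
      -- (iii) : some small tilt misses Ω₁ entirely
      have hmiss_s : ∃ s : ℝ, 0 < s ∧ s < s₀ ∧ ∀ t : ℝ, x + t • (v + s • n) ∉ Ω₁ := by
        by_contra hno
        push_neg at hno
        have hwit : ∀ s : ℝ, 0 < s → s < s₀ → ∃ t : ℝ, t * s < 0 ∧
            x + t • v + (t * s) • n ∈ Ω₁ := by
          intro s h1 h2
          obtain ⟨t, ht⟩ := hno s h1 h2
          have hexp : x + t • (v + s • n) = x + t • v + (t * s) • n := by
            rw [smul_add, smul_smul]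
            abel
          rw [hexp] at ht
          refine ⟨t, ?_, ht⟩
          have hlt := hf _ ht
          rw [map_add, map_add, f.map_smul, f.map_smul, hvf, hfn] at hlt
          simp only [smul_eq_mul, mul_zero, mul_one, add_zero] at hlt
          linarith
        by_cases hA : ∀ k : ℕ, ∃ s t : ℝ, 0 < s ∧ s < s₀ ∧ t * s < 0 ∧
            (x + t • v + (t * s) • n ∈ Ω₁) ∧ -(t * s) < ((k : ℝ) + 1)⁻¹
        · -- Case A : witnesses with depth tending to zero
          choose sA tA h1A h2A h3A h4A h5A using hA
          have htneg : ∀ k, tA k ≤ 0 := by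
            intro k
            nlinarith [h1A k, h3A k]
          have hx1 : ∀ k, x + (tA k * sA k) • n ∈ closure Ω₁ := by
            intro k
            have hz : x + tA k • v + (tA k * sA k) • n ∈ closure Ω₁ := subset_closure (h4A k)
            have := hrayC1 _ hz (-(tA k)) (by linarith [htneg k])
            have heq : x + tA k • v + (tA k * sA k) • n + (-(tA k)) • v
                = x + (tA k * sA k) • n := by module
            rwa [heq] at this
          have hx2 : ∀ k, x + v + (tA k * sA k) • n ∈ closure Ω₁ := by
            intro k
            have hz : x + tA k • v + (tA k * sA k) • n ∈ closure Ω₁ := subset_closure (h4A k)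
            have := hrayC1 _ hz (1 - tA k) (by linarith [htneg k])
            have heq : x + tA k • v + (tA k * sA k) • n + (1 - tA k) • v
                = x + v + (tA k * sA k) • n := by module
            rwa [heq] at this
          have hinv : Filter.Tendsto (fun k : ℕ => ((k:ℝ)+1)⁻¹) Filter.atTop (nhds 0) := by
            simpa [one_div] using tendsto_one_div_add_atTop_nhds_zero_nat (𝕜 := ℝ)
          have hts0 : Filter.Tendsto (fun k => tA k * sA k) Filter.atTop (nhds 0) := by
            have hb : Filter.Tendsto (fun k : ℕ => -((k:ℝ)+1)⁻¹) Filter.atTop (nhds 0) := by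
              rw [← neg_zero]
              exact hinv.neg
            refine tendsto_of_tendsto_of_tendsto_of_le_of_le hb
              (tendsto_const_nhds (x := (0:ℝ))) ?_ ?_
            · intro k
              show -((k:ℝ)+1)⁻¹ ≤ tA k * sA k
              linarith [h5A k]
            · intro k
              show tA k * sA k ≤ (0:ℝ)
              linarith [h3A k]
          have hxC1 : x ∈ closure Ω₁ := by
            have hcont : Continuous fun r : ℝ => x + r • n :=
              continuous_const.add (continuous_id.smul continuous_const)
            have htend := (hcont.tendsto (0:ℝ)).comp hts0
            have htend' : Filter.Tendsto (fun k : ℕ => x + (tA k * sA k) • n)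
                Filter.atTop (nhds x) := by simpa [Function.comp_def] using htend
            exact hC1cl.mem_of_tendsto htend' (Filter.Eventually.of_forall hx1)
          have hxvC1 : x + v ∈ closure Ω₁ := by
            have hcont : Continuous fun r : ℝ => x + v + r • n :=
              continuous_const.add (continuous_id.smul continuous_const)
            have htend := (hcont.tendsto (0:ℝ)).comp hts0
            have htend' : Filter.Tendsto (fun k : ℕ => x + v + (tA k * sA k) • n)
                Filter.atTop (nhds (x + v)) := by simpa [Function.comp_def] using htend
            exact hC1cl.mem_of_tendsto htend' (Filter.Eventually.of_forall hx2)
          have hx_ne : x ≠ x + v := by simp [hv0]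
          have hmid := hsc1 hxC1 hxvC1 hx_ne
            (by norm_num : (0:ℝ) < 2⁻¹) (by norm_num : (0:ℝ) < 2⁻¹) (by norm_num)
          obtain ⟨ε', hε', hball⟩ := Metric.isOpen_iff.mp isOpen_interior _ hmid
          have hnn : 0 < ‖n‖ := norm_pos_iff.mpr hn0
          have hδ : 0 < ε' / (2 * ‖n‖) := by positivity
          have hzmem : (2⁻¹:ℝ) • x + (2⁻¹:ℝ) • (x + v) + (ε' / (2 * ‖n‖)) • n
              ∈ interior (closure Ω₁) := by
            apply hball
            rw [Metric.mem_ball, dist_eq_norm]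
            have heq : (2⁻¹:ℝ) • x + (2⁻¹:ℝ) • (x + v) + (ε' / (2 * ‖n‖)) • n
                - ((2⁻¹:ℝ) • x + (2⁻¹:ℝ) • (x + v)) = (ε' / (2 * ‖n‖)) • n := by abel
            rw [heq, norm_smul]
            simp only [Real.norm_eq_abs, abs_of_pos hδ]
            have hne : ‖n‖ ≠ 0 := ne_of_gt hnn
            have h2 : ε' / (2 * ‖n‖) * ‖n‖ = ε' / 2 := by field_simp; try ring
            linarith [h2]
          have hfmem := hC1sub (interior_subset hzmem)
          simp only [Set.mem_setOf_eq, map_add, f.map_smul, hfn, hvf, smul_eq_mul,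
            inv_mul_cancel₀ hw₁, mul_one, add_zero, mul_zero] at hfmem
          -- hfmem gives a numeric contradiction
          have : ε' / (2 * ‖n‖) > 0 := hδ
          linarith
        · -- Case B : all witnesses have depth at least ε
          push_neg at hA
          obtain ⟨k₀, hk₀⟩ := hA
          have hε : (0:ℝ) < ((k₀:ℝ)+1)⁻¹ := by positivity
          set ε := ((k₀:ℝ)+1)⁻¹ with hε_def
          have hsj1 : ∀ j : ℕ, 0 < s₀ * ((j:ℝ)+2)⁻¹ := by intro j; positivity
          have hsj2 : ∀ j : ℕ, s₀ * ((j:ℝ)+2)⁻¹ < s₀ := by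
            intro j
            have hj2 : (0:ℝ) < (j:ℝ) + 2 := by positivity
            have h1 : ((j:ℝ)+2)⁻¹ ≤ 2⁻¹ := by
              apply inv_anti₀ (by norm_num)
              have : (0:ℝ) ≤ (j:ℝ) := Nat.cast_nonneg j
              linarith
            calc s₀ * ((j:ℝ)+2)⁻¹ ≤ s₀ * 2⁻¹ := by
                  exact mul_le_mul_of_nonneg_left h1 hs₀.le
              _ < s₀ := by linarith
          choose tj htj1 htj2 using fun j : ℕ => hwit _ (hsj1 j) (hsj2 j)
          set sj := fun j : ℕ => s₀ * ((j:ℝ)+2)⁻¹ with hsj_def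
          have hdj_ε : ∀ j, ε ≤ -(tj j * sj j) :=
            fun j => hk₀ (sj j) (tj j) (hsj1 j) (hsj2 j) (htj1 j) (htj2 j)
          have hdj_pos : ∀ j, 0 < -(tj j * sj j) := fun j => lt_of_lt_of_le hε (hdj_ε j)
          have htj_neg : ∀ j, tj j < 0 := by
            intro j
            nlinarith [htj1 j, hsj1 j]
          have hP : ∀ (j : ℕ) (ρ : ℝ), tj j ≤ ρ →
              x + ρ • v + (tj j * sj j) • n ∈ closure Ω₁ := by
            intro j ρ hρ
            have hz : x + tj j • v + (tj j * sj j) • n ∈ closure Ω₁ := subset_closure (htj2 j)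
            have := hrayC1 _ hz (ρ - tj j) (by linarith)
            have heq : x + tj j • v + (tj j * sj j) • n + (ρ - tj j) • v
                = x + ρ • v + (tj j * sj j) • n := by module
            rwa [heq] at this
          set lj := fun j : ℕ => ε / -(tj j * sj j) with hlj_def
          have hl1 : ∀ j, 0 < lj j := fun j => div_pos hε (hdj_pos j)
          have hl2 : ∀ j, lj j ≤ 1 := fun j => by
            show ε / -(tj j * sj j) ≤ 1
            rw [div_le_one (hdj_pos j)]
            exact hdj_ε j
          have hld : ∀ j, lj j * -(tj j * sj j) = ε := by
            intro j
            show ε / -(tj j * sj j) * -(tj j * sj j) = ε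
            exact div_mul_cancel₀ ε (ne_of_gt (hdj_pos j))
          have hW : ∀ (j : ℕ) (σ : ℝ), -ε ≤ σ * sj j →
              lj j • x + (1 - lj j) • y + σ • v + (-ε) • n ∈ closure Ω₁ := by
            intro j σ hσ
            have hsj0 : (0:ℝ) < sj j := hsj1 j
            have htj0 : tj j ≠ 0 := ne_of_lt (htj_neg j)
            have hρ : tj j ≤ σ / lj j := by
              rw [le_div_iff₀ (hl1 j)]
              have h1 : tj j * lj j = -(ε / sj j) := by
                show tj j * (ε / -(tj j * sj j)) = -(ε / sj j)
                field_simp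
              rw [h1]
              have hdd : -ε / sj j ≤ σ := (div_le_iff₀ hsj0).mpr (by linarith)
              rw [neg_div] at hdd
              exact hdd
            have hPm := hP j (σ / lj j) hρ
            have hcomb := hC1conv hPm hyC1 (hl1 j).le
              (by linarith [hl2 j] : (0:ℝ) ≤ 1 - lj j) (by ring)
            have h1 : lj j * (σ / lj j) = σ := by
              rw [mul_comm]
              exact div_mul_cancel₀ σ (ne_of_gt (hl1 j))
            have heq : lj j • (x + (σ / lj j) • v + (tj j * sj j) • n) + (1 - lj j) • y
                = lj j • x + (1 - lj j) • y + (lj j * (σ / lj j)) • v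
                  + (lj j * (tj j * sj j)) • n := by module
            have h2 : lj j * (tj j * sj j) = -ε := by
              have h := hld j
              rw [mul_neg] at h
              linarith
            rw [heq, h1, h2] at hcomb
            exact hcomb
          have hlmem : ∀ j, lj j ∈ Set.Icc (0:ℝ) 1 := fun j => ⟨(hl1 j).le, hl2 j⟩
          obtain ⟨lstar, hlsmem, ψ, hψmono, hψtend⟩ := isCompact_Icc.tendsto_subseq hlmem
          have hline : ∀ σ : ℝ,
              lstar • x + (1 - lstar) • y + σ • v + (-ε) • n ∈ closure Ω₁ := by
            intro σ
            have hev : ∀ᶠ j in Filter.atTop,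
                lj (ψ j) • x + (1 - lj (ψ j)) • y + σ • v + (-ε) • n ∈ closure Ω₁ := by
              obtain ⟨J, hJ⟩ := exists_nat_gt (|σ| * s₀ / ε)
              rw [Filter.eventually_atTop]
              refine ⟨J, fun j hj => ?_⟩
              apply hW
              have hψj : (j:ℝ) ≤ (ψ j : ℝ) := Nat.cast_le.mpr hψmono.le_apply
              have hpos2 : (0:ℝ) < (j:ℝ) + 2 := by positivity
              have hpos2' : (0:ℝ) < (ψ j : ℝ) + 2 := by positivity
              have h1 : ((ψ j : ℝ)+2)⁻¹ ≤ ((j:ℝ)+2)⁻¹ := by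
                apply inv_anti₀ hpos2
                linarith
              have hsjle : sj (ψ j) ≤ s₀ * ((j:ℝ)+2)⁻¹ := by
                show s₀ * ((ψ j : ℝ)+2)⁻¹ ≤ s₀ * ((j:ℝ)+2)⁻¹
                exact mul_le_mul_of_nonneg_left h1 hs₀.le
              have hJj : (J:ℝ) ≤ (j:ℝ) := Nat.cast_le.mpr hj
              have hJs : |σ| * s₀ < ε * ((j:ℝ)+2) := by
                have h3 := (div_lt_iff₀ hε).mp hJ
                nlinarith
              have hkey : |σ| * sj (ψ j) < ε := by
                have h4 : |σ| * sj (ψ j) ≤ |σ| * (s₀ * ((j:ℝ)+2)⁻¹) :=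
                  mul_le_mul_of_nonneg_left hsjle (abs_nonneg σ)
                have h5 : |σ| * (s₀ * ((j:ℝ)+2)⁻¹) < ε := by
                  rw [← mul_assoc, mul_inv_lt_iff₀ hpos2]
                  linarith [hJs]
                linarith
              have h0 : (0:ℝ) ≤ sj (ψ j) := (hsj1 _).le
              have h6 : (0:ℝ) ≤ (σ + |σ|) * sj (ψ j) :=
                mul_nonneg (by linarith [neg_abs_le σ]) h0
              nlinarith
            have hcont : Continuous fun l : ℝ => l • x + (1 - l) • y + σ • v + (-ε) • n := by
              apply Continuous.add
              apply Continuous.add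
              apply Continuous.add
              · exact continuous_id.smul continuous_const
              · exact (continuous_const.sub continuous_id).smul continuous_const
              · exact continuous_const
              · exact continuous_const
            have htend := (hcont.tendsto lstar).comp hψtend
            exact hC1cl.mem_of_tendsto htend hev
          have hu₀ : ∀ σ : ℝ,
              (lstar • x + (1 - lstar) • y + (-ε) • n) + σ • v ∈ closure Ω₁ := by
            intro σ
            have h := hline σ
            have heq : lstar • x + (1 - lstar) • y + σ • v + (-ε) • n
                = (lstar • x + (1 - lstar) • y + (-ε) • n) + σ • v := by abel
            rwa [heq] at h
          have hu00 : (lstar • x + (1 - lstar) • y + (-ε) • n) ∈ closure Ω₁ := by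
            simpa using hu₀ 0
          refine no_line hC1conv hC1cl hsc1 hC1proper hv0 hu00
            (fun t ht => hu₀ t) hu00 (fun t ht => ?_)
          have h := hu₀ (-t)
          have heq : (lstar • x + (1 - lstar) • y + (-ε) • n) + (-t) • v
              = (lstar • x + (1 - lstar) • y + (-ε) • n) + t • (-v) := by module
          rwa [heq] at h
      obtain ⟨s, hs, hss₀, hmiss⟩ := hmiss_s
      exact chord_of_dir h0open (hw0 s hs) hx0 (hBA_s s hs) (hBB_s s hs hss₀) hmiss
    -- reduce to hmain
    by_cases hb : BddAbove {t : ℝ | x + t • v₀ ∈ closure Ω₀} ∧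
        BddBelow {t : ℝ | x + t • v₀ ∈ closure Ω₀}
    · have hmiss : ∀ t : ℝ, x + t • v₀ ∉ Ω₁ := by
        intro t hmem
        have := hf _ hmem
        rw [map_add, f.map_smul, hv₀f, smul_zero, add_zero] at this
        exact lt_irrefl _ this
      exact chord_of_dir h0open hv₀0 hx0 hb.1 hb.2 hmiss
    · rcases not_and_or.mp hb with hnb | hnb
      · exact hmain v₀ hv₀f hv₀0 (hrayC0_of_unbddAbove _ hnb)
      · refine hmain (-v₀) (by rw [map_neg, hv₀f, neg_zero]) (neg_ne_zero.mpr hv₀0) ?_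
        exact hrayneg_of_unbddBelow _ hnb

end MainChord


/-- For every `x ∈ Ω = cl Ω₀ \ Ω₁` and every bounded interval `I = (a,b)` there exists
`φ ∈ A(I)` with `⟨φ⟩_I = x`. -/
theorem statement1 {d : ℕ} (hd : 2 ≤ d)
    (Ω₀ Ω₁ : Set (EuclideanSpace ℝ (Fin d)))
    (h0open : IsOpen Ω₀) (h0conv : Convex ℝ Ω₀) (h0ne : Ω₀.Nonempty)
    (h0proper : Ω₀ ≠ Set.univ)
    (h1open : IsOpen Ω₁) (h1conv : Convex ℝ Ω₁) (h1ne : Ω₁.Nonempty)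
    (hcl : closure Ω₁ ⊆ Ω₀)
    (hsc0 : StrictConvex ℝ (closure Ω₀)) (hsc1 : StrictConvex ℝ (closure Ω₁))
    (hcone : d = 2 → ConeCondition Ω₀ Ω₁)
    (a b : ℝ) (hab : a < b) :
    ∀ x ∈ closure Ω₀ \ Ω₁, ∃ φ : ℝ → EuclideanSpace ℝ (Fin d),
      MemClassA Ω₀ Ω₁ a b φ ∧ intervalAvg a b φ = x := by
  intro x hx
  obtain ⟨hxcl, hxout⟩ := hx
  obtain ⟨p, q, hpfr, hqfr, hxseg, hseg⟩ := exists_chord hd Ω₀ Ω₁ h0open h0conv h0ne h0proper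
    h1open h1conv h1ne hsc0 hsc1 hcone hxcl hxout
  obtain ⟨α, β, hα, hβ, hαβ, hx_eq⟩ := hxseg
  have hba : (0:ℝ) < b - a := by linarith
  set m := a + α * (b - a) with hm_def
  have hα1 : α ≤ 1 := by linarith
  refine ⟨fun t => if t < m then p else q, ⟨?_, ?_, ?_⟩, ?_⟩
  · exact step_integrableOn p q m measurableSet_Ioo
      (by rw [Real.volume_Ioo]; exact ENNReal.ofReal_lt_top)
  · intro t ht
    by_cases h : t < m
    · simpa [h] using hpfr
    · simpa [h] using hqfr
  · intro c e hac hce heb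
    rw [step_avg p q hce]
    by_cases h1 : m ≤ c
    · rw [if_pos h1]
      exact hseg q (right_mem_segment ℝ p q)
    · rw [if_neg h1]
      push_neg at h1
      by_cases h2 : e ≤ m
      · rw [if_pos h2]
        exact hseg p (left_mem_segment ℝ p q)
      · rw [if_neg h2]
        push_neg at h2
        have hec : (0:ℝ) < e - c := by linarith
        apply hseg
        refine ⟨(e - c)⁻¹ * (m - c), (e - c)⁻¹ * (e - m),
          mul_nonneg (inv_nonneg.mpr hec.le) (by linarith),
          mul_nonneg (inv_nonneg.mpr hec.le) (by linarith), ?_, ?_⟩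
        · field_simp; ring
        · rw [smul_add, smul_smul, smul_smul]
  · rw [step_avg p q hab]
    by_cases h1 : m ≤ a
    · rw [if_pos h1]
      have hα0 : α = 0 := by nlinarith
      have hβ1 : β = 1 := by linarith
      rw [hα0, hβ1] at hx_eq
      simpa using hx_eq
    · rw [if_neg h1]
      push_neg at h1
      by_cases h2 : b ≤ m
      · rw [if_pos h2]
        have hα1' : α = 1 := by nlinarith
        have hβ0 : β = 0 := by linarith
        rw [hα1', hβ0] at hx_eq
        simpa using hx_eq
      · rw [if_neg h2]
        have hma : m - a = α * (b - a) := by rw [hm_def]; ring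
        have hbm : b - m = β * (b - a) := by rw [hm_def]; nlinarith [hαβ]
        rw [hma, hbm, ← hx_eq, smul_add, smul_smul, smul_smul]
        have e1 : (b - a)⁻¹ * (α * (b - a)) = α := by field_simp
        have e2 : (b - a)⁻¹ * (β * (b - a)) = β := by field_simp
        rw [e1, e2]
end
end

section
/- Assume the open convex sets Ω₀ and Ω₁ satisfy the strict convexity condition; in the case d = 2 assume additionally the cone condition. Then for every x ∈ Ω* = cl(Ω₀) \ cl(Ω₁) there exists a function φ ∈ A° with ⟨φ⟩_𝕋 = x. -/
noncomputable section

/-- The class `A°`: summable `1`-periodic functions (functions on the circle of unit length)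
with values in `∂Ω₀`, for which there is an open set `W` with
`cl Ω₁ ⊆ W`, `cl W ⊆ Ω₀`, such that all interval averages avoid `W`. -/
def MemClassACirc {d : ℕ} (Ω₀ Ω₁ : Set (EuclideanSpace ℝ (Fin d)))
    (φ : ℝ → EuclideanSpace ℝ (Fin d)) : Prop :=
  Function.Periodic φ 1 ∧
  MeasureTheory.IntegrableOn φ (Set.Ioo 0 1) ∧
  (∀ t : ℝ, φ t ∈ frontier Ω₀) ∧
  ∃ W : Set (EuclideanSpace ℝ (Fin d)), IsOpen W ∧ closure Ω₁ ⊆ W ∧ closure W ⊆ Ω₀ ∧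
    ∀ a b : ℝ, a < b → intervalAvg a b φ ∉ W


open Set MeasureTheory Metric
open scoped RealInnerProductSpace

namespace Statement2Aux

variable {d : ℕ}

local notation "E" => EuclideanSpace ℝ (Fin d)

/-- Recession lemma: a recession direction at one point is a recession direction at all points
of a closed convex set. -/
theorem recession {S : Set E} (hconv : Convex ℝ S) (hcl : IsClosed S)
    {q v : E} (hray : ∀ t : ℝ, 0 ≤ t → q + t • v ∈ S) {p : E} (hp : p ∈ S) :
    ∀ t : ℝ, 0 ≤ t → p + t • v ∈ S := by
  intro t ht
  have key : ∀ n : ℕ, p + t • v + ((n : ℝ) + 1)⁻¹ • (q - p) ∈ S := by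
    intro n
    have hn : (0 : ℝ) < (n : ℝ) + 1 := by positivity
    have hb : (0 : ℝ) < ((n : ℝ) + 1)⁻¹ := by positivity
    have hb1 : ((n : ℝ) + 1)⁻¹ ≤ 1 := by
      rw [inv_le_one_iff₀]; right; linarith
    have hmem := hconv hp (hray (((n : ℝ) + 1) * t) (by positivity))
      (by linarith : (0:ℝ) ≤ 1 - ((n : ℝ) + 1)⁻¹) hb.le (by ring)
    have hc : ((n : ℝ) + 1)⁻¹ * (((n : ℝ) + 1) * t) = t := by
      field_simp
    have heq : (1 - ((n : ℝ) + 1)⁻¹) • p + ((n : ℝ) + 1)⁻¹ • (q + (((n : ℝ) + 1) * t) • v)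
        = p + t • v + ((n : ℝ) + 1)⁻¹ • (q - p) := by
      rw [smul_add, smul_smul, hc]
      module
    rwa [heq] at hmem
  have hlim : Filter.Tendsto (fun n : ℕ => p + t • v + ((n : ℝ) + 1)⁻¹ • (q - p))
      Filter.atTop (nhds (p + t • v)) := by
    have h0 : Filter.Tendsto (fun n : ℕ => ((n : ℝ) + 1)⁻¹) Filter.atTop (nhds 0) := by
      simpa [one_div] using tendsto_one_div_add_atTop_nhds_zero_nat (𝕜 := ℝ)
    have := Filter.Tendsto.smul_const h0 (q - p)
    rw [zero_smul] at this
    simpa using Filter.Tendsto.add (tendsto_const_nhds (x := p + t • v)) this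
  exact hcl.mem_of_tendsto hlim (Filter.Eventually.of_forall key)

/-- A strictly convex proper open convex set's closure contains no line. -/
theorem no_line {Ω₀ : Set (EuclideanSpace ℝ (Fin d))} (h0open : IsOpen Ω₀)
    (h0conv : Convex ℝ Ω₀) (h0ne : Ω₀.Nonempty) (h0proper : Ω₀ ≠ Set.univ)
    (hsc0 : StrictConvex ℝ (closure Ω₀)) {q v : E} (hv : v ≠ 0)
    (h₁ : ∀ t : ℝ, 0 ≤ t → q + t • v ∈ closure Ω₀)
    (h₂ : ∀ t : ℝ, 0 ≤ t → q + t • (-v) ∈ closure Ω₀) : False := by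
  have hsub : closure Ω₀ ⊆ interior (closure Ω₀) := by
    intro z hz
    have hz₁ : z + v ∈ closure Ω₀ := by
      have := recession h0conv.closure isClosed_closure h₁ hz 1 zero_le_one
      simpa using this
    have hz₂ : z - v ∈ closure Ω₀ := by
      have := recession h0conv.closure isClosed_closure h₂ hz 1 zero_le_one
      simpa [sub_eq_add_neg] using this
    have hne : z + v ≠ z - v := by
      intro h
      apply hv
      have : v - -v = 0 := by
        have := sub_eq_zero_of_eq h
        simpa [add_sub_add_left_eq_sub, sub_neg_eq_add] using this
      simpa [sub_neg_eq_add, two_smul] using (by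
        have h2 : v + v = 0 := by linear_combination (norm := module) this
        have : (2 : ℝ) • v = 0 := by rw [two_smul]; exact h2
        have h2ne : (2 : ℝ) ≠ 0 := two_ne_zero
        exact smul_eq_zero.mp this |>.resolve_left h2ne)
    have hmem := hsc0 hz₁ hz₂ hne (by norm_num : (0:ℝ) < 1/2) (by norm_num : (0:ℝ) < 1/2)
      (by norm_num)
    have heq : (1/2 : ℝ) • (z + v) + (1/2 : ℝ) • (z - v) = z := by module
    rwa [heq] at hmem
  have hclopen : IsClopen (closure Ω₀) := by
    refine ⟨isClosed_closure, ?_⟩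
    have : interior (closure Ω₀) = closure Ω₀ :=
      subset_antisymm interior_subset hsub
    rw [← this]; exact isOpen_interior
  have huniv : closure Ω₀ = Set.univ :=
    hclopen.eq_univ (h0ne.mono subset_closure)
  obtain ⟨x₀, hx₀⟩ := Set.ne_univ_iff_exists_notMem _ |>.1 h0proper
  obtain ⟨f, hf⟩ := geometric_hahn_banach_open_point h0conv h0open hx₀
  have hle : closure Ω₀ ⊆ {z | f z ≤ f x₀} := by
    apply closure_minimal (fun a ha => (hf a ha).le)
    exact isClosed_le f.continuous continuous_const
  obtain ⟨a, ha⟩ := h0ne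
  have hfne : ∃ w, f w ≠ 0 := by
    by_contra h
    push_neg at h
    have := hf a ha
    rw [h a, h x₀] at this
    exact lt_irrefl 0 this
  obtain ⟨w, hw⟩ := hfne
  have hmem : x₀ + (f w)⁻¹ • w ∈ closure Ω₀ := by rw [huniv]; trivial
  have := hle hmem
  simp only [Set.mem_setOf_eq, map_add, f.map_smul, smul_eq_mul,
    inv_mul_cancel₀ hw] at this
  linarith

/-- A ray from an interior point staying in the closure stays in the open set. -/
theorem ray_interior {Ω₀ : Set (EuclideanSpace ℝ (Fin d))} (h0open : IsOpen Ω₀)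
    (h0conv : Convex ℝ Ω₀) {x v : E} (hx : x ∈ Ω₀)
    (h : ∀ t : ℝ, 0 ≤ t → x + t • v ∈ closure Ω₀) :
    ∀ t : ℝ, 0 ≤ t → x + t • v ∈ Ω₀ := by
  intro t ht
  rcases eq_or_lt_of_le ht with h0 | h0
  · simpa [← h0] using hx
  have hmem : x + t • v ∈ openSegment ℝ x (x + (2 * t) • v) := by
    refine ⟨1/2, 1/2, by norm_num, by norm_num, by norm_num, ?_⟩
    have : (1/2 : ℝ) * (2 * t) = t := by ring
    rw [smul_add, smul_smul, this]
    module
  have := h0conv.openSegment_interior_closure_subset_interior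
    (by rwa [h0open.interior_eq]) (h (2 * t) (by linarith)) hmem
  rwa [h0open.interior_eq] at this

/-- If a perpendicular recession ray exists inside `Ω₁`, we contradict the
variational inequality of the projection together with strict convexity. -/
theorem perp_ray_false {Ω₁ : Set (EuclideanSpace ℝ (Fin d))} (h1conv : Convex ℝ Ω₁)
    (hsc1 : StrictConvex ℝ (closure Ω₁)) {p v₀ u : E} (hp : p ∈ closure Ω₁)
    (hvar : ∀ a ∈ closure Ω₁, ⟪v₀, a - p⟫ ≤ 0)
    (hv₀ : v₀ ≠ 0) (hu : u ≠ 0) (hperp : ⟪v₀, u⟫ = 0)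
    {y : E} (hray : ∀ t : ℝ, 0 ≤ t → y + t • u ∈ Ω₁) : False := by
  have hray' : ∀ t : ℝ, 0 ≤ t → p + t • u ∈ closure Ω₁ :=
    recession h1conv.closure isClosed_closure
      (fun t ht => subset_closure (hray t ht)) hp
  have hp1 : p + u ∈ closure Ω₁ := by simpa using hray' 1 zero_le_one
  have hne : p ≠ p + u := by
    intro h
    apply hu
    have := congrArg (· - p) h
    simpa using this.symm
  have hmid := hsc1 hp hp1 hne (by norm_num : (0:ℝ) < 1/2) (by norm_num : (0:ℝ) < 1/2)
    (by norm_num)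
  set m := (1/2 : ℝ) • p + (1/2 : ℝ) • (p + u) with hm
  obtain ⟨ε, hε, hball⟩ := Metric.isOpen_iff.1 isOpen_interior m hmid
  have hnv : (0:ℝ) < ‖v₀‖ := norm_pos_iff.2 hv₀
  set c : ℝ := ε / (2 * ‖v₀‖) with hc
  have hcpos : 0 < c := by positivity
  have hmema : m + c • v₀ ∈ closure Ω₁ := by
    apply interior_subset
    apply hball
    rw [Metric.mem_ball, dist_eq_norm]
    have h1 : m + c • v₀ - m = c • v₀ := by abel
    have h2 : ‖c • v₀‖ = ε / 2 := by
      rw [norm_smul, Real.norm_of_nonneg hcpos.le, hc]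
      field_simp
    rw [h1, h2]
    linarith
  have hle := hvar _ hmema
  have heq : m + c • v₀ - p = (1/2 : ℝ) • u + c • v₀ := by
    rw [hm]; module
  rw [heq, inner_add_right, real_inner_smul_right, real_inner_smul_right, hperp,
    real_inner_self_eq_norm_sq] at hle
  nlinarith [mul_pos hcpos (mul_pos hnv hnv)]

/-- Existence of a good direction: perpendicular to `v₀`, with bounded intersection
of the line through `x` with `closure Ω₀`. -/
theorem good_direction {Ω₀ Ω₁ : Set (EuclideanSpace ℝ (Fin d))} (hd : 2 ≤ d)
    (h0open : IsOpen Ω₀) (h0conv : Convex ℝ Ω₀) (h0ne : Ω₀.Nonempty)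
    (h0proper : Ω₀ ≠ Set.univ) (h1conv : Convex ℝ Ω₁)
    (hsc0 : StrictConvex ℝ (closure Ω₀)) (hsc1 : StrictConvex ℝ (closure Ω₁))
    (hcone : d = 2 → ConeCondition Ω₀ Ω₁)
    {x p v₀ : E} (hx : x ∈ Ω₀) (hp : p ∈ closure Ω₁)
    (hvar : ∀ a ∈ closure Ω₁, ⟪v₀, a - p⟫ ≤ 0) (hv₀ : v₀ ≠ 0) :
    ∃ u : E, u ≠ 0 ∧ ⟪v₀, u⟫ = 0 ∧
      ¬ (∀ t : ℝ, 0 ≤ t → x + t • u ∈ closure Ω₀) ∧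
      ¬ (∀ t : ℝ, 0 ≤ t → x + t • (-u) ∈ closure Ω₀) := by
  -- helper : if a perpendicular direction is a recession direction of `closure Ω₀`
  -- and the cone condition holds, we get a contradiction
  have badray : ∀ u : E, u ≠ 0 → ⟪v₀, u⟫ = 0 → ConeCondition Ω₀ Ω₁ →
      (∀ t : ℝ, 0 ≤ t → x + t • u ∈ closure Ω₀) → False := by
    intro u hu hperp hcc hray
    have hrayΩ : ∀ t : ℝ, 0 ≤ t → x + t • u ∈ Ω₀ :=
      ray_interior h0open h0conv hx hray
    obtain ⟨y, hy⟩ := hcc x u hu hrayΩ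
    exact perp_ray_false h1conv hsc1 hp hvar hv₀ hu hperp hy
  rcases eq_or_lt_of_le hd with h2 | h3
  · -- case d = 2
    have h2' : d = 2 := h2.symm
    subst h2'
    have hcc := hcone rfl
    set u : EuclideanSpace ℝ (Fin 2) :=
      (WithLp.equiv 2 (Fin 2 → ℝ)).symm ![-(v₀ 1), v₀ 0] with hu_def
    have hu0 : u 0 = -(v₀ 1) := rfl
    have hu1 : u 1 = v₀ 0 := rfl
    have hv01 : ¬ (v₀ 0 = 0 ∧ v₀ 1 = 0) := by
      rintro ⟨ha, hb⟩
      apply hv₀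
      ext i
      fin_cases i <;> simpa [ha, hb]
    have hu : u ≠ 0 := by
      intro h
      apply hv01
      constructor
      · have := congrArg (fun w : EuclideanSpace ℝ (Fin 2) => w 1) h
        simpa [hu1] using this
      · have := congrArg (fun w : EuclideanSpace ℝ (Fin 2) => w 0) h
        have h2 : -(v₀ 1) = 0 := by simpa [hu0] using this
        linarith [neg_eq_zero.mp h2]
    have hperp : ⟪v₀, u⟫ = 0 := by
      have : ⟪v₀, u⟫ = v₀ 0 * u 0 + v₀ 1 * u 1 := by
        simp [PiLp.inner_apply, Fin.sum_univ_two, RCLike.inner_apply, conj_trivial]; ring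
      rw [this, hu0, hu1]
      ring
    refine ⟨u, hu, hperp, ?_, ?_⟩
    · exact fun h => badray u hu hperp hcc h
    · refine fun h => badray (-u) (neg_ne_zero.2 hu) (by rw [inner_neg_right, hperp, neg_zero]) hcc h
  · -- case 2 < d
    classical
    set K : Submodule ℝ (EuclideanSpace ℝ (Fin d)) := (ℝ ∙ v₀)ᗮ with hK
    have hrank2 : 2 ≤ Module.finrank ℝ K := by
      have h1 : Module.finrank ℝ (ℝ ∙ v₀) = 1 := finrank_span_singleton hv₀
      have hsum := Submodule.finrank_add_finrank_orthogonal (K := (ℝ ∙ v₀))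
      rw [h1, finrank_euclideanSpace_fin] at hsum
      rw [← hK] at hsum
      omega
    have hrank : 1 < Module.rank ℝ K := by
      rw [← Module.finrank_eq_rank]
      exact_mod_cast lt_of_lt_of_le one_lt_two hrank2
    have hconn : IsConnected (sphere (0 : K) 1) := isConnected_sphere hrank 0 zero_le_one
    set Ap : Set K := {w : K | ∀ t : ℝ, 0 ≤ t → x + t • (w : E) ∈ closure Ω₀} with hAp_def
    set Am : Set K := {w : K | ∀ t : ℝ, 0 ≤ t → x + t • (-(w : E)) ∈ closure Ω₀} with hAm_def
    have hclosed : ∀ c : ℝ, IsClosed {w : K | x + c • (w : E) ∈ closure Ω₀} := by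
      intro c
      have : Continuous fun w : K => x + c • (w : E) :=
        continuous_const.add (continuous_subtype_val.const_smul c)
      exact IsClosed.preimage this isClosed_closure
    have hApc : IsClosed Ap := by
      have : Ap = ⋂ t ∈ {t : ℝ | 0 ≤ t}, {w : K | x + t • (w : E) ∈ closure Ω₀} := by
        ext w; simp [hAp_def]
      rw [this]
      exact isClosed_biInter fun t _ => hclosed t
    have hAmc : IsClosed Am := by
      have hcont : ∀ c : ℝ, IsClosed {w : K | x + c • (-(w : E)) ∈ closure Ω₀} := by
        intro c
        have : Continuous fun w : K => x + c • (-(w : E)) :=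
          continuous_const.add ((continuous_subtype_val.neg).const_smul c)
        exact IsClosed.preimage this isClosed_closure
      have : Am = ⋂ t ∈ {t : ℝ | 0 ≤ t}, {w : K | x + t • (-(w : E)) ∈ closure Ω₀} := by
        ext w; simp [hAm_def]
      rw [this]
      exact isClosed_biInter fun t _ => hcont t
    have hcoe_ne : ∀ w : K, w ∈ sphere (0 : K) 1 → (w : E) ≠ 0 := by
      intro w hw h
      have h1 : ‖w‖ = 1 := by simpa using hw
      have h2 : w = 0 := Submodule.coe_eq_zero.mp h
      rw [h2] at h1
      simp at h1
    have hdisj : ∀ w : K, w ∈ sphere (0 : K) 1 → ¬ (w ∈ Ap ∧ w ∈ Am) := by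
      rintro w hw ⟨h₁, h₂⟩
      exact no_line h0open h0conv h0ne h0proper hsc0 (hcoe_ne w hw)
        (q := x) h₁ h₂
    by_cases hcov : ∃ w ∈ sphere (0 : K) 1, w ∉ Ap ∧ w ∉ Am
    · obtain ⟨w, hw, hwp, hwm⟩ := hcov
      refine ⟨(w : E), hcoe_ne w hw, ?_, ?_, ?_⟩
      · exact (Submodule.mem_orthogonal (Submodule.span ℝ {v₀}) (w : E)).mp w.2 v₀
          (Submodule.mem_span_singleton_self v₀)
      · exact fun h => hwp h
      · exact fun h => hwm h
    · exfalso
      push_neg at hcov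
      have hsubset : sphere (0 : K) 1 ⊆ Ap ∪ Am := by
        intro w hw
        rcases Classical.em (w ∈ Ap) with h | h
        · exact Or.inl h
        · exact Or.inr (hcov w hw h)
      have hpre := hconn.isPreconnected
      have hopen1 : IsOpen Amᶜ := hAmc.isOpen_compl
      have hopen2 : IsOpen Apᶜ := hApc.isOpen_compl
      have hsub2 : sphere (0 : K) 1 ⊆ Amᶜ ∪ Apᶜ := by
        intro w hw
        rcases hsubset hw with h | h
        · exact Or.inl (fun hm => hdisj w hw ⟨h, hm⟩)
        · exact Or.inr (fun hp => hdisj w hw ⟨hp, h⟩)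
      have hkey : ¬ ((sphere (0 : K) 1 ∩ Amᶜ).Nonempty ∧ (sphere (0 : K) 1 ∩ Apᶜ).Nonempty) := by
        rintro ⟨hne1, hne2⟩
        obtain ⟨w, hw⟩ := hpre _ _ hopen1 hopen2 hsub2 hne1 hne2
        rcases hsubset hw.1 with h | h
        · exact hw.2.2 h
        · exact hw.2.1 h
      obtain ⟨w₀, hw₀⟩ := hconn.nonempty
      have hw₀' : -w₀ ∈ sphere (0 : K) 1 := by
        simpa using hw₀
      rcases not_and_or.mp hkey with h | h
      · -- sphere ⊆ Am
        have hall : ∀ w ∈ sphere (0 : K) 1, w ∈ Am := by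
          intro w hw
          by_contra hmem
          exact h ⟨w, hw, hmem⟩
        have h1 := hall w₀ hw₀
        have h2 := hall (-w₀) hw₀'
        refine no_line h0open h0conv h0ne h0proper hsc0 (hcoe_ne w₀ hw₀) (q := x) ?_ h1
        intro t ht
        have := h2 t ht
        simpa using this
      · -- sphere ⊆ Ap
        have hall : ∀ w ∈ sphere (0 : K) 1, w ∈ Ap := by
          intro w hw
          by_contra hmem
          exact h ⟨w, hw, hmem⟩
        have h1 := hall w₀ hw₀
        have h2 := hall (-w₀) hw₀'
        refine no_line h0open h0conv h0ne h0proper hsc0 (hcoe_ne w₀ hw₀) (q := x) h1 ?_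
        intro t ht
        have := h2 t ht
        simpa using this

/-- The construction of the two-valued periodic function. -/
theorem construct {Ω₀ Ω₁ : Set (EuclideanSpace ℝ (Fin d))} (h0open : IsOpen Ω₀)
    (hcl : closure Ω₁ ⊆ Ω₀)
    {y₀ y₁ x : E} (hy₀ : y₀ ∈ frontier Ω₀) (hy₁ : y₁ ∈ frontier Ω₀)
    {lam : ℝ} (hlam0 : 0 < lam) (hlam1 : lam < 1)
    (hx : lam • y₁ + (1 - lam) • y₀ = x)
    (hdisj : ∀ z ∈ segment ℝ y₀ y₁, z ∉ closure Ω₁) :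
    ∃ φ : ℝ → EuclideanSpace ℝ (Fin d), MemClassACirc Ω₀ Ω₁ φ ∧ intervalAvg 0 1 φ = x := by
  classical
  set φ : ℝ → E := fun t => if Int.fract t < lam then y₁ else y₀ with hφ
  have hper : Function.Periodic φ 1 := by
    intro t; simp [hφ, Int.fract_add_one]
  have hmeas : Measurable φ :=
    Measurable.ite (measurableSet_lt measurable_fract measurable_const)
      measurable_const measurable_const
  have hbdd : ∀ t, ‖φ t‖ ≤ max ‖y₀‖ ‖y₁‖ := by
    intro t
    by_cases h : Int.fract t < lam <;> simp [hφ, h]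
  have hint : ∀ s : Set ℝ, volume s ≠ ⊤ → IntegrableOn φ s := by
    intro s hs
    haveI : IsFiniteMeasure (volume.restrict s) :=
      ⟨by rw [Measure.restrict_apply_univ]; exact hs.lt_top⟩
    exact Integrable.mono' (integrable_const (max ‖y₀‖ ‖y₁‖))
      hmeas.aestronglyMeasurable (Filter.Eventually.of_forall hbdd)
  have hseg : ∀ t, φ t ∈ segment ℝ y₀ y₁ := by
    intro t
    by_cases h : Int.fract t < lam
    · simp only [hφ, h, if_true]; exact right_mem_segment ℝ y₀ y₁
    · simp only [hφ, h, if_false]; exact left_mem_segment ℝ y₀ y₁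
  have hfr : ∀ t, φ t ∈ frontier Ω₀ := by
    intro t; by_cases h : Int.fract t < lam <;> simp [hφ, h, hy₀, hy₁]
  have hsegcl : IsClosed (segment ℝ y₀ y₁) := by
    rw [segment_eq_image]
    exact (isCompact_Icc.image (by continuity)).isClosed
  have havg : ∀ a b : ℝ, a < b → intervalAvg a b φ ∈ segment ℝ y₀ y₁ := by
    intro a b hab
    have h0 : volume (Set.Ioo a b) ≠ 0 := by
      simp only [Real.volume_Ioo, ne_eq, ENNReal.ofReal_eq_zero, not_le]
      linarith
    have hT : volume (Set.Ioo a b) ≠ ⊤ := measure_Ioo_lt_top.ne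
    have hmem := (convex_segment y₀ y₁).set_average_mem hsegcl h0 hT
      (Filter.Eventually.of_forall (fun t => hseg t)) (hint _ hT)
    rw [setAverage_eq, measureReal_def, Real.volume_Ioo, ENNReal.toReal_ofReal (by linarith)] at hmem
    exact hmem
  -- the open neighbourhood W
  have hd2 : Disjoint (closure Ω₁) Ω₀ᶜ :=
    Set.disjoint_left.2 fun z hz hzc => hzc (hcl hz)
  obtain ⟨U, V', hUopen, hV'open, hU1, hV'c, hUV'⟩ :=
    normal_separation isClosed_closure (isClosed_compl_iff.2 h0open) hd2
  set V : Set (EuclideanSpace ℝ (Fin d)) := {z | 0 < infDist z (segment ℝ y₀ y₁)} with hV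
  have hVopen : IsOpen V := isOpen_lt continuous_const (continuous_infDist_pt _)
  have hsegne : (segment ℝ y₀ y₁).Nonempty := ⟨y₀, left_mem_segment ℝ y₀ y₁⟩
  have hV1 : closure Ω₁ ⊆ V := by
    intro z hz
    have hzs : z ∉ segment ℝ y₀ y₁ := fun hzs => hdisj z hzs hz
    have hne0 : infDist z (segment ℝ y₀ y₁) ≠ 0 := by
      intro h
      exact hzs ((hsegcl.mem_iff_infDist_zero hsegne).2 h)
    exact lt_of_le_of_ne infDist_nonneg (Ne.symm hne0)
  refine ⟨φ, ⟨hper, hint _ measure_Ioo_lt_top.ne, hfr,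
    U ∩ V, hUopen.inter hVopen, Set.subset_inter hU1 hV1, ?_, ?_⟩, ?_⟩
  · -- closure (U ∩ V) ⊆ Ω₀
    have h1 : closure (U ∩ V) ⊆ closure U := closure_mono Set.inter_subset_left
    have h2 : closure U ⊆ V'ᶜ :=
      closure_minimal (fun z hz hz' => Set.disjoint_left.1 hUV' hz hz')
        hV'open.isClosed_compl
    intro z hz
    by_contra hzo
    exact h2 (h1 hz) (hV'c hzo)
  · intro a b hab hmem
    have h0' : infDist (intervalAvg a b φ) (segment ℝ y₀ y₁) = 0 :=
      infDist_zero_of_mem (havg a b hab)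
    have := hmem.2
    rw [Set.mem_setOf_eq, h0'] at this
    exact lt_irrefl 0 this
  · -- the total average equals x
    have hsplit : Set.Ioo (0:ℝ) 1 = Set.Ioo 0 lam ∪ Set.Ico lam 1 := by
      ext t
      simp only [Set.mem_Ioo, Set.mem_union, Set.mem_Ico]
      constructor
      · rintro ⟨h1, h2⟩
        rcases lt_or_ge t lam with h | h
        · exact Or.inl ⟨h1, h⟩
        · exact Or.inr ⟨h, h2⟩
      · rintro (⟨h1, h2⟩ | ⟨h1, h2⟩)
        · exact ⟨h1, h2.trans hlam1⟩
        · exact ⟨hlam0.trans_le h1, h2⟩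
    have hi1 : ∫ t in Set.Ioo (0:ℝ) 1, φ t =
        (∫ t in Set.Ioo 0 lam, φ t) + ∫ t in Set.Ico lam 1, φ t := by
      rw [hsplit]
      exact setIntegral_union (by
          rw [Set.disjoint_left]
          rintro t ⟨_, h2⟩ ⟨h3, _⟩
          exact absurd h3 (not_le.2 h2)) measurableSet_Ico
        (hint _ measure_Ioo_lt_top.ne) (hint _ measure_Ico_lt_top.ne)
    have hc1 : ∫ t in Set.Ioo (0:ℝ) lam, φ t = lam • y₁ := by
      have heq : Set.EqOn φ (fun _ => y₁) (Set.Ioo 0 lam) := by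
        intro t ht
        have hf : Int.fract t = t := Int.fract_eq_self.2 ⟨ht.1.le, ht.2.trans hlam1⟩
        simp [hφ, hf, ht.2]
      rw [setIntegral_congr_fun measurableSet_Ioo heq, setIntegral_const, measureReal_def, Real.volume_Ioo,
        sub_zero, ENNReal.toReal_ofReal hlam0.le]
    have hc2 : ∫ t in Set.Ico lam (1:ℝ), φ t = (1 - lam) • y₀ := by
      have heq : Set.EqOn φ (fun _ => y₀) (Set.Ico lam 1) := by
        intro t ht
        have hf : Int.fract t = t := Int.fract_eq_self.2 ⟨hlam0.le.trans ht.1, ht.2⟩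
        simp [hφ, hf, not_lt.2 ht.1]
      rw [setIntegral_congr_fun measurableSet_Ico heq, setIntegral_const, measureReal_def, Real.volume_Ico,
        ENNReal.toReal_ofReal (by linarith)]
    rw [intervalAvg, hi1, hc1, hc2, sub_zero, inv_one, one_smul, hx]

end Statement2Aux

open Statement2Aux

/-- For every `x ∈ Ω* = cl Ω₀ \ cl Ω₁` there exists `φ ∈ A°` with `⟨φ⟩_𝕋 = x`. -/
theorem statement2 {d : ℕ} (hd : 2 ≤ d)
    (Ω₀ Ω₁ : Set (EuclideanSpace ℝ (Fin d)))
    (h0open : IsOpen Ω₀) (h0conv : Convex ℝ Ω₀) (h0ne : Ω₀.Nonempty)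
    (h0proper : Ω₀ ≠ Set.univ)
    (h1open : IsOpen Ω₁) (h1conv : Convex ℝ Ω₁) (h1ne : Ω₁.Nonempty)
    (hcl : closure Ω₁ ⊆ Ω₀)
    (hsc0 : StrictConvex ℝ (closure Ω₀)) (hsc1 : StrictConvex ℝ (closure Ω₁))
    (hcone : d = 2 → ConeCondition Ω₀ Ω₁) :
    ∀ x ∈ closure Ω₀ \ closure Ω₁, ∃ φ : ℝ → EuclideanSpace ℝ (Fin d),
      MemClassACirc Ω₀ Ω₁ φ ∧ intervalAvg 0 1 φ = x := by
  rintro x ⟨hxcl, hx1⟩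
  by_cases hxo : x ∈ Ω₀
  · -- x is an interior point : the two-point construction
    have h1necl : (closure Ω₁).Nonempty := h1ne.mono subset_closure
    obtain ⟨p, hpK, hmin⟩ := exists_norm_eq_iInf_of_complete_convex h1necl
      isClosed_closure.isComplete h1conv.closure x
    have hvar := (norm_eq_iInf_iff_real_inner_le_zero h1conv.closure hpK).1 hmin
    have hv₀ : x - p ≠ 0 := sub_ne_zero.2 (fun h => hx1 (h ▸ hpK))
    obtain ⟨u, hu, hperp, hbp, hbm⟩ := good_direction hd h0open h0conv h0ne h0proper
      h1conv hsc0 hsc1 hcone hxo hpK hvar hv₀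
    have hupos : (0:ℝ) < ‖u‖ := norm_pos_iff.2 hu
    set T := {t : ℝ | x + t • u ∈ closure Ω₀} with hT
    have hTconv : Convex ℝ T := by
      intro t₁ h₁ t₂ h₂ a b ha hb hab
      have hmem := h0conv.closure h₁ h₂ ha hb hab
      have heq : a • (x + t₁ • u) + b • (x + t₂ • u)
          = (a + b) • x + (a * t₁ + b * t₂) • u := by module
      rw [heq, hab, one_smul] at hmem
      exact hmem
    have hTclosed : IsClosed T := by
      have hcont : Continuous fun t : ℝ => x + t • u :=
        continuous_const.add (continuous_id.smul continuous_const)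
      exact IsClosed.preimage hcont isClosed_closure
    have h0T : (0:ℝ) ∈ T := by
      show x + (0:ℝ) • u ∈ closure Ω₀
      simpa using hxcl
    have hTne : T.Nonempty := ⟨0, h0T⟩
    have hIcc : ∀ a ∈ T, ∀ b ∈ T, Set.Icc a b ⊆ T := fun a ha b hb =>
      hTconv.ordConnected.out ha hb
    have hbddp : BddAbove T := by
      by_contra hno
      apply hbp
      intro t ht
      obtain ⟨s, hsT, hst⟩ := not_bddAbove_iff.1 hno t
      exact hIcc 0 h0T s hsT ⟨ht, hst.le⟩
    have hbddm : BddBelow T := by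
      by_contra hno
      apply hbm
      intro t ht
      obtain ⟨s, hsT, hst⟩ := not_bddBelow_iff.1 hno (-t)
      have hmem : -t ∈ T := hIcc s hsT 0 h0T ⟨hst.le, by linarith⟩
      have heq : x + t • (-u) = x + (-t) • u := by module
      rw [heq]
      exact hmem
    set tp := sSup T with htp
    set tm := sInf T with htm
    have htpT : tp ∈ T := hTclosed.csSup_mem hTne hbddp
    have htmT : tm ∈ T := hTclosed.csInf_mem hTne hbddm
    -- tp > 0 and tm < 0 since a small ball around x is inside Ω₀
    obtain ⟨ε, hε, hball⟩ := Metric.isOpen_iff.1 h0open x hxo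
    have hsmall : ∀ c : ℝ, |c| * ‖u‖ < ε → c ∈ T := by
      intro c hc
      apply subset_closure
      apply hball
      rw [Metric.mem_ball, dist_eq_norm]
      have heq : x + c • u - x = c • u := by abel
      rw [heq, norm_smul, Real.norm_eq_abs]
      exact hc
    have hδ : |ε / (2 * ‖u‖)| * ‖u‖ < ε := by
      rw [abs_of_pos (by positivity)]
      rw [div_mul_eq_mul_div, mul_comm (2 : ℝ) ‖u‖, ← div_div, mul_div_assoc,
        div_self hupos.ne']
      linarith
    have hδT : ε / (2 * ‖u‖) ∈ T := hsmall _ hδ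
    have hδT' : -(ε / (2 * ‖u‖)) ∈ T := hsmall _ (by rwa [abs_neg])
    have hδpos : 0 < ε / (2 * ‖u‖) := by positivity
    have htppos : 0 < tp := lt_of_lt_of_le hδpos (le_csSup hbddp hδT)
    have htmneg : tm < 0 := lt_of_le_of_lt (csInf_le hbddm hδT') (by linarith)
    -- the endpoints
    set y₀ := x + tp • u with hy₀def
    set y₁ := x + tm • u with hy₁def
    have hy₀fr : y₀ ∈ frontier Ω₀ := by
      rw [h0open.frontier_eq]
      refine ⟨htpT, ?_⟩
      intro hmem
      obtain ⟨ε', hε', hball'⟩ := Metric.isOpen_iff.1 h0open y₀ hmem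
      have hmem2 : tp + ε' / (2 * ‖u‖) ∈ T := by
        apply subset_closure
        apply hball'
        rw [Metric.mem_ball, dist_eq_norm]
        have heq : x + (tp + ε' / (2 * ‖u‖)) • u - y₀ = (ε' / (2 * ‖u‖)) • u := by
          rw [hy₀def]; module
        rw [heq, norm_smul, Real.norm_eq_abs, abs_of_pos (by positivity),
          div_mul_eq_mul_div, mul_comm (2 : ℝ) ‖u‖, ← div_div, mul_div_assoc,
          div_self hupos.ne']
        linarith
      have := le_csSup hbddp hmem2
      have hpos : 0 < ε' / (2 * ‖u‖) := by positivity
      linarith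
    have hy₁fr : y₁ ∈ frontier Ω₀ := by
      rw [h0open.frontier_eq]
      refine ⟨htmT, ?_⟩
      intro hmem
      obtain ⟨ε', hε', hball'⟩ := Metric.isOpen_iff.1 h0open y₁ hmem
      have hmem2 : tm - ε' / (2 * ‖u‖) ∈ T := by
        apply subset_closure
        apply hball'
        rw [Metric.mem_ball, dist_eq_norm]
        have heq : x + (tm - ε' / (2 * ‖u‖)) • u - y₁ = (-(ε' / (2 * ‖u‖))) • u := by
          rw [hy₁def]; module
        rw [heq, norm_smul, Real.norm_eq_abs, abs_neg, abs_of_pos (by positivity),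
          div_mul_eq_mul_div, mul_comm (2 : ℝ) ‖u‖, ← div_div, mul_div_assoc,
          div_self hupos.ne']
        linarith
      have := csInf_le hbddm hmem2
      have hpos : 0 < ε' / (2 * ‖u‖) := by positivity
      linarith
    -- the weight
    set lam := tp / (tp - tm) with hlam
    have hden : 0 < tp - tm := by linarith
    have hlam0 : 0 < lam := by positivity
    have hlam1 : lam < 1 := by
      rw [hlam, div_lt_one hden]
      linarith
    have hxeq : lam • y₁ + (1 - lam) • y₀ = x := by
      rw [hy₀def, hy₁def]
      have h1 : lam * tm + (1 - lam) * tp = 0 := by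
        rw [hlam]; field_simp; ring
      have heq : lam • (x + tm • u) + (1 - lam) • (x + tp • u)
          = (lam + (1 - lam)) • x + (lam * tm + (1 - lam) * tp) • u := by module
      rw [heq, h1]
      simp
    -- the segment avoids the closure of Ω₁
    have hdisj : ∀ z ∈ segment ℝ y₀ y₁, z ∉ closure Ω₁ := by
      intro z hz hzK
      rw [segment_eq_image] at hz
      obtain ⟨θ, hθ, hzeq⟩ := hz
      have hle := hvar z hzK
      have heq : z - p = (x - p) + ((1 - θ) * tp + θ * tm) • u := by
        rw [← hzeq, hy₀def, hy₁def]; module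
      rw [heq, inner_add_right, real_inner_smul_right, hperp,
        real_inner_self_eq_norm_sq] at hle
      have hnv : 0 < ‖x - p‖ := norm_pos_iff.2 hv₀
      nlinarith
    exact construct h0open hcl hy₀fr hy₁fr hlam0 hlam1 hxeq hdisj

  · -- x is a boundary point : the constant construction
    have hfr : x ∈ frontier Ω₀ := by
      rw [h0open.frontier_eq]
      exact ⟨hxcl, hxo⟩
    have hx' : (1/2 : ℝ) • x + (1 - 1/2 : ℝ) • x = x := by
      rw [← add_smul]; norm_num
    refine construct h0open hcl hfr hfr (lam := 1/2) (by norm_num) (by norm_num) hx' ?_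
    intro z hz
    rw [segment_same] at hz
    rwa [hz]
end
end

section
/- Let Ω₀ and Ω₁ satisfy the strict convexity condition and cl(Ω₁) ⊆ Ω₀. Then the cone condition holds if and only if for every open set Ω̃₁ with cl(Ω̃₁) ⊆ Ω₁ the function Δ(x) = sup{ max(1, |x−y|/|x−z|) : x ∈ [y,z], y ∈ Ω, z ∈ cl(Ω̃₁) } is uniformly bounded on every compact subset of Ω. -/
noncomputable section


open Filter Metric Set

section Helpers

variable {E : Type*} [NormedAddCommGroup E] [NormedSpace ℝ E]

lemma rayA {C : Set E} (hC : Convex ℝ C) {q v : E}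
    (hq : ∀ s : ℝ, 0 ≤ s → q + s • v ∈ closure C)
    {p : E} (hp : p ∈ closure C) : ∀ t : ℝ, 0 ≤ t → p + t • v ∈ closure C := by
  intro t ht
  have hCc : Convex ℝ (closure C) := hC.closure
  have hlim : Tendsto (fun n : ℕ => (p + t • v) + ((n:ℝ)+1)⁻¹ • (q - p)) atTop
      (nhds (p + t • v)) := by
    have h0 : Tendsto (fun n : ℕ => ((n:ℝ)+1)⁻¹) atTop (nhds 0) :=
      tendsto_one_div_add_atTop_nhds_zero_nat.congr (by intro n; rw [one_div])
    have := (h0.smul_const (q - p))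
    rw [zero_smul] at this
    simpa using (tendsto_const_nhds (x := p + t • v)).add this
  refine isClosed_closure.mem_of_tendsto hlim (Filter.Eventually.of_forall ?_)
  intro n
  have hlam : (0:ℝ) < ((n:ℝ)+1)⁻¹ := by positivity
  have hlam1 : ((n:ℝ)+1)⁻¹ ≤ 1 := by
    rw [inv_le_one_iff₀]; right; linarith [Nat.cast_nonneg (α := ℝ) n]
  have hmem := hCc (hq (((n:ℝ)+1) * t) (by positivity)) hp hlam.le
      (show (0:ℝ) ≤ 1 - ((n:ℝ)+1)⁻¹ by linarith)
      (show ((n:ℝ)+1)⁻¹ + (1 - ((n:ℝ)+1)⁻¹) = 1 by ring)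
  convert hmem using 1
  have hne : ((n:ℝ)+1) ≠ 0 := by positivity
  match_scalars <;> field_simp <;> ring

lemma rayB {C : Set E} (hC : Convex ℝ C) (hCo : IsOpen C) {q v : E}
    (hq : ∀ s : ℝ, 0 ≤ s → q + s • v ∈ closure C)
    {p : E} (hp : p ∈ C) : ∀ t : ℝ, 0 ≤ t → p + t • v ∈ C := by
  intro t ht
  have h2 : p + (2*t) • v ∈ closure C := rayA hC hq (subset_closure hp) (2*t) (by linarith)
  have hpint : p ∈ interior C := by rwa [hCo.interior_eq]
  have := hC.combo_interior_closure_mem_interior hpint h2 (a := 1/2) (b := 1/2)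
      (by norm_num) (by norm_num) (by norm_num)
  rw [hCo.interior_eq] at this
  convert this using 1
  module

lemma seg_helper {z₀ v : E} {s D : ℝ} (h0 : 0 ≤ s) (hsD : s ≤ D) (hD : 0 < D) :
    z₀ + s • v ∈ segment ℝ (z₀ + D • v) z₀ := by
  refine ⟨s / D, 1 - s / D, div_nonneg h0 hD.le, ?_, by ring, ?_⟩
  · have := div_le_one_of_le₀ hsD hD.le
    linarith
  · match_scalars
    · ring
    · field_simp

lemma smul_aux (w Vn : E) {rn : ℝ} (Sn : ℝ) (h : rn ≠ 0) :
    rn⁻¹ • (w - Sn • Vn) + Vn = rn⁻¹ • w + ((rn - Sn)/rn) • Vn := by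
  match_scalars <;> field_simp <;> ring


end Helpers

set_option maxHeartbeats 1000000 in
/-- The cone condition holds if and only if for every open set `Ωt₁` with `cl Ωt₁ ⊆ Ω₁`,
the function `Δ(x) = sup { max(1, |x−y|/|x−z|) : x ∈ [y,z], y ∈ Ω, z ∈ cl Ωt₁ }` is
uniformly bounded on every compact subset of `Ω = cl Ω₀ \ Ω₁`. -/
theorem statement8 {d : ℕ} (hd : 2 ≤ d)
    (Ω₀ Ω₁ : Set (EuclideanSpace ℝ (Fin d)))
    (h0open : IsOpen Ω₀) (h0conv : Convex ℝ Ω₀) (h0ne : Ω₀.Nonempty)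
    (h0proper : Ω₀ ≠ Set.univ)
    (h1open : IsOpen Ω₁) (h1conv : Convex ℝ Ω₁) (h1ne : Ω₁.Nonempty)
    (hcl : closure Ω₁ ⊆ Ω₀)
    (hsc0 : StrictConvex ℝ (closure Ω₀)) (hsc1 : StrictConvex ℝ (closure Ω₁)) :
    ConeCondition Ω₀ Ω₁ ↔
      ∀ Ωt₁ : Set (EuclideanSpace ℝ (Fin d)), IsOpen Ωt₁ → closure Ωt₁ ⊆ Ω₁ →
        ∀ K : Set (EuclideanSpace ℝ (Fin d)), K ⊆ closure Ω₀ \ Ω₁ → IsCompact K →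
          ∃ C : ℝ, ∀ x ∈ K, ∀ y ∈ closure Ω₀ \ Ω₁, ∀ z ∈ closure Ωt₁,
            x ∈ segment ℝ y z → max 1 (‖x - y‖ / ‖x - z‖) ≤ C := by
  constructor
  · intro hcone
    -- forward direction
    intro Ωt₁ htopen htsub K hK hKcomp
    set T : Set (EuclideanSpace ℝ (Fin d)) := closure Ωt₁ with hTdef
    rcases Set.eq_empty_or_nonempty T with hTe | hTne
    · exact ⟨1, fun x _ y _ z hz _ => absurd (hTe ▸ hz) (Set.notMem_empty z)⟩
    rcases Set.eq_empty_or_nonempty K with hKe | hKne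
    · exact ⟨1, fun x hx => absurd (hKe ▸ hx) (Set.notMem_empty x)⟩
    obtain ⟨p₁, hp₁⟩ := h1ne
    have hTclosed : IsClosed T := isClosed_closure
    -- positive distance between K and T
    obtain ⟨w₀, hw₀K, hw₀min⟩ := hKcomp.exists_isMinOn hKne
      ((Metric.continuous_infDist_pt T).continuousOn)
    set δ : ℝ := Metric.infDist w₀ T with hδdef
    have hδpos : 0 < δ := by
      rw [hδdef, ← (hTclosed.notMem_iff_infDist_pos hTne)]
      intro hmem
      exact (hK hw₀K).2 (htsub hmem)
    have hdistlb : ∀ x ∈ K, ∀ z ∈ T, δ ≤ ‖x - z‖ := by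
      intro x hx z hz
      rw [← dist_eq_norm]
      exact le_trans (hw₀min hx) (Metric.infDist_le_dist_of_mem hz)
    by_contra hnoC
    push_neg at hnoC
    have hseq : ∀ n : ℕ, ∃ x ∈ K, ∃ y ∈ closure Ω₀ \ Ω₁, ∃ z ∈ T,
        x ∈ segment ℝ y z ∧ ((n:ℝ)+1) < max 1 (‖x - y‖ / ‖x - z‖) := by
      intro n
      obtain ⟨x, hx, y, hy, z, hz, hseg, hgt⟩ := hnoC ((n:ℝ)+1)
      exact ⟨x, hx, y, hy, z, hz, hseg, hgt⟩
    choose X hXK Y hY Z hZ hseg hgt using hseq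
    have hXZpos : ∀ n : ℕ, 0 < ‖X n - Z n‖ := fun n =>
      lt_of_lt_of_le hδpos (hdistlb _ (hXK n) _ (hZ n))
    have hratio : ∀ n : ℕ, ((n:ℝ)+1) < ‖X n - Y n‖ / ‖X n - Z n‖ := by
      intro n
      rcases lt_max_iff.1 (hgt n) with h1 | h2
      · exfalso
        have h3 : (0:ℝ) ≤ (n:ℝ) := Nat.cast_nonneg n
        linarith
      · exact h2
    have hXYlb : ∀ n : ℕ, ((n:ℝ)+1) * δ < ‖X n - Y n‖ := by
      intro n
      have h1 := (lt_div_iff₀ (hXZpos n)).1 (hratio n)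
      have h2 : ((n:ℝ)+1) * δ ≤ ((n:ℝ)+1) * ‖X n - Z n‖ :=
        mul_le_mul_of_nonneg_left (hdistlb _ (hXK n) _ (hZ n)) (by positivity)
      linarith
    have hXYpos : ∀ n : ℕ, 0 < ‖Y n - X n‖ := by
      intro n
      rw [norm_sub_rev]
      exact lt_of_le_of_lt (by positivity) (hXYlb n)
    set V : ℕ → (EuclideanSpace ℝ (Fin d)) := fun n => ‖Y n - X n‖⁻¹ • (Y n - X n) with hV
    have hVsph : ∀ n, V n ∈ Metric.sphere (0:(EuclideanSpace ℝ (Fin d))) 1 := by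
      intro n
      rw [mem_sphere_iff_norm, sub_zero, hV, norm_smul, norm_inv, norm_norm,
        inv_mul_cancel₀ (hXYpos n).ne']
    -- X - Z = s • V with s = ‖X - Z‖
    have hdecomp : ∀ n : ℕ, X n - Z n = ‖X n - Z n‖ • V n := by
      intro n
      obtain ⟨a, b, ha, hb, hab, habx⟩ := hseg n
      have h1 : X n - Z n = a • (Y n - Z n) := by
        rw [← habx]; match_scalars <;> linarith
      have h2 : Y n - X n = b • (Y n - Z n) := by
        rw [← habx]; match_scalars <;> linarith
      have hbne : b ≠ 0 := by
        intro hb0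
        rw [hb0, zero_smul] at h2
        have := hXYpos n
        rw [h2, norm_zero] at this
        exact lt_irrefl _ this
      have h3 : X n - Z n = (a / b) • (Y n - X n) := by
        rw [h2, h1, smul_smul, div_mul_cancel₀ _ hbne]
      have hab0 : 0 ≤ a / b := div_nonneg ha (hb)
      have h4 : ‖X n - Z n‖ = (a / b) * ‖Y n - X n‖ := by
        rw [h3, norm_smul, Real.norm_eq_abs, abs_of_nonneg hab0]
      rw [h4, hV, smul_smul, mul_assoc, mul_inv_cancel₀ (hXYpos n).ne', mul_one, h3]
    set S : ℕ → ℝ := fun n => ‖X n - Z n‖ with hS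
    -- extract convergent subsequences
    obtain ⟨xs, hxsK, φ, hφ, hxconv⟩ := hKcomp.tendsto_subseq hXK
    obtain ⟨vv, hvvsph, ψ, hψ, hvconv⟩ :=
      (isCompact_sphere (0:(EuclideanSpace ℝ (Fin d))) 1).tendsto_subseq (fun n => hVsph (φ n))
    set ρ : ℕ → ℕ := φ ∘ ψ with hρ
    have hρmono : StrictMono ρ := hφ.comp hψ
    have hxconv2 : Tendsto (fun n => X (ρ n)) atTop (nhds xs) := hxconv.comp hψ.tendsto_atTop
    have hvconv2 : Tendsto (fun n => V (ρ n)) atTop (nhds vv) := hvconv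
    have hvvnorm : ‖vv‖ = 1 := by
      rw [mem_sphere_iff_norm, sub_zero] at hvvsph; exact hvvsph
    have hvvne : vv ≠ 0 := by
      intro h; rw [h, norm_zero] at hvvnorm; exact one_ne_zero hvvnorm.symm
    -- lengths to Y blow up
    have hlen : ∀ n : ℕ, ((n:ℝ)+1) * δ < ‖Y (ρ n) - X (ρ n)‖ := by
      intro n
      have h1 := hXYlb (ρ n)
      have h2 : ((n:ℝ)+1) ≤ ((ρ n:ℝ)+1) := by
        have := hρmono.le_apply (x := n)
        have : (n:ℝ) ≤ (ρ n : ℝ) := by exact_mod_cast this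
        linarith
      rw [norm_sub_rev]
      calc ((n:ℝ)+1) * δ ≤ ((ρ n:ℝ)+1) * δ := by nlinarith
      _ < ‖X (ρ n) - Y (ρ n)‖ := h1
    -- the limiting ray lies in closure Ω₀
    have hraycl : ∀ t : ℝ, 0 ≤ t → xs + t • vv ∈ closure Ω₀ := by
      intro t ht
      have hlim : Tendsto (fun n => X (ρ n) + t • V (ρ n)) atTop (nhds (xs + t • vv)) :=
        hxconv2.add ((hvconv2.const_smul t))
      refine isClosed_closure.mem_of_tendsto hlim ?_
      rw [eventually_atTop]
      refine ⟨Nat.ceil (t / δ), fun n hn => ?_⟩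
      have hle : t ≤ ‖Y (ρ n) - X (ρ n)‖ := by
        have h1 : t / δ ≤ (Nat.ceil (t / δ) : ℝ) := Nat.le_ceil _
        have h2 : (Nat.ceil (t / δ) : ℝ) ≤ (n : ℝ) := by exact_mod_cast hn
        have h3 : t ≤ (n : ℝ) * δ := by
          rw [div_le_iff₀ hδpos] at h1; nlinarith
        have := hlen n
        nlinarith
      have hseg2 : X (ρ n) + t • V (ρ n) ∈ segment ℝ (X (ρ n)) (Y (ρ n)) := by
        rw [segment_eq_image']
        refine ⟨t / ‖Y (ρ n) - X (ρ n)‖, ⟨by positivity, ?_⟩, ?_⟩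
        · rw [div_le_one (hXYpos (ρ n))]; exact hle
        · rw [hV, smul_smul, div_eq_mul_inv]
      have hsub : segment ℝ (X (ρ n)) (Y (ρ n)) ⊆ closure Ω₀ := by
        apply (h0conv.closure).segment_subset
        · exact (hK (hXK (ρ n))).1
        · exact (hY (ρ n)).1
      exact hsub hseg2
    -- apply the cone condition
    have hΩ₀ray : ∀ t : ℝ, 0 ≤ t → p₁ + t • vv ∈ Ω₀ :=
      rayB h0conv h0open hraycl (hcl (subset_closure hp₁))
    obtain ⟨y₀, hy₀⟩ := hcone p₁ vv hvvne hΩ₀ray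
    have hy₀cl : ∀ s : ℝ, 0 ≤ s → y₀ + s • vv ∈ closure Ω₁ :=
      fun s hs => subset_closure (hy₀ s hs)
    -- dichotomy on S ∘ ρ
    by_cases hbdd : ∃ M : ℝ, ∃ᶠ n in atTop, S (ρ n) ≤ M
    · -- bounded case
      obtain ⟨M, hM⟩ := hbdd
      obtain ⟨ψ₂, hψ₂, hψ₂M⟩ := Filter.extraction_of_frequently_atTop hM
      have hmemIcc : ∀ n, S (ρ (ψ₂ n)) ∈ Set.Icc δ M := fun n =>
        ⟨hdistlb _ (hXK _) _ (hZ _), hψ₂M n⟩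
      obtain ⟨ss, hssIcc, ψ₃, hψ₃, hsconv⟩ := (isCompact_Icc).tendsto_subseq hmemIcc
      set σ : ℕ → ℕ := fun n => ρ (ψ₂ (ψ₃ n)) with hσ
      have hxσ : Tendsto (fun n => X (σ n)) atTop (nhds xs) :=
        hxconv2.comp ((hψ₂.comp hψ₃).tendsto_atTop)
      have hvσ : Tendsto (fun n => V (σ n)) atTop (nhds vv) :=
        hvconv2.comp ((hψ₂.comp hψ₃).tendsto_atTop)
      have hsσ : Tendsto (fun n => S (σ n)) atTop (nhds ss) := hsconv
      have hzlim : Tendsto (fun n => Z (σ n)) atTop (nhds (xs - ss • vv)) := by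
        have h1 : ∀ n, Z (σ n) = X (σ n) - S (σ n) • V (σ n) := by
          intro n
          have := hdecomp (σ n)
          have h2 : Z (σ n) = X (σ n) - (X (σ n) - Z (σ n)) := by module
          rw [h2, this]
        rw [funext h1]
        exact hxσ.sub (hsσ.smul hvσ)
      have hzsT : xs - ss • vv ∈ T := hTclosed.mem_of_tendsto hzlim
        (Filter.Eventually.of_forall (fun n => hZ (σ n)))
      have hzsΩ₁ : xs - ss • vv ∈ Ω₁ := htsub hzsT
      have hss0 : 0 ≤ ss := le_trans hδpos.le hssIcc.1
      have hxsΩ₁ : xs ∈ Ω₁ := by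
        have := rayB h1conv h1open hy₀cl hzsΩ₁ ss hss0
        convert this using 1
        module
      exact (hK hxsK).2 hxsΩ₁
    · -- unbounded case : S (ρ n) → ∞
      push_neg at hbdd
      have htends : Tendsto (fun n => S (ρ n)) atTop atTop := by
        rw [Filter.tendsto_atTop]
        intro M
        have := hbdd M
        filter_upwards [this] with n hn
        exact hn.le
      -- bound on ‖X - p₁‖
      obtain ⟨R, hR⟩ : ∃ R : ℝ, ∀ x ∈ K, ‖x - p₁‖ ≤ R := by
        obtain ⟨R, hR⟩ := hKcomp.isBounded.subset_closedBall p₁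
        exact ⟨R, fun x hx => by
          have := hR hx
          rwa [Metric.mem_closedBall, dist_eq_norm] at this⟩
      have hRpos : 0 ≤ R := le_trans (norm_nonneg _) (hR _ hw₀K)
      have hVnorm : ∀ n, ‖V n‖ = 1 := by
        intro n
        have := hVsph n
        rwa [mem_sphere_iff_norm, sub_zero] at this
      have hSlb : ∀ n, δ ≤ S n := fun n => hdistlb _ (hXK n) _ (hZ n)
      have hZeq : ∀ n, Z n - p₁ = (X n - p₁) - S n • V n := by
        intro n
        have h := hdecomp n
        rw [hS]
        simp only []
        rw [← h]
        module
      have hZdist : ∀ n, S (ρ n) - R ≤ ‖Z (ρ n) - p₁‖ := by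
        intro n
        have h1 := hZeq (ρ n)
        have h2 : ‖S (ρ n) • V (ρ n)‖ = S (ρ n) := by
          rw [norm_smul, hVnorm, mul_one, Real.norm_eq_abs,
            abs_of_nonneg (le_trans hδpos.le (hSlb (ρ n)))]
        have h3 : ‖S (ρ n) • V (ρ n)‖ - ‖X (ρ n) - p₁‖ ≤
            ‖S (ρ n) • V (ρ n) - (X (ρ n) - p₁)‖ := norm_sub_norm_le _ _
        have h4 : ‖S (ρ n) • V (ρ n) - (X (ρ n) - p₁)‖ = ‖Z (ρ n) - p₁‖ := by
          rw [h1, ← norm_neg]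
          congr 1
          module
        have h5 := hR _ (hXK (ρ n))
        rw [h4, h2] at h3
        linarith
      have hZtends : Tendsto (fun n => ‖Z (ρ n) - p₁‖) atTop atTop := by
        refine tendsto_atTop_mono hZdist ?_
        exact Filter.tendsto_atTop_add_const_right _ (-R) htends |>.congr (by intro n; ring_nf)
      set u : ℕ → EuclideanSpace ℝ (Fin d) :=
        fun n => ‖Z (ρ n) - p₁‖⁻¹ • (Z (ρ n) - p₁) with hu
      -- u n + V (ρ n) → 0
      have hbound : ∀ᶠ n in atTop, ‖u n + V (ρ n)‖ ≤ 2 * R / ‖Z (ρ n) - p₁‖ := by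
        filter_upwards [hZtends.eventually_ge_atTop 1] with n hn
        have hrpos : (0:ℝ) < ‖Z (ρ n) - p₁‖ := lt_of_lt_of_le one_pos hn
        set r : ℝ := ‖Z (ρ n) - p₁‖ with hr
        have h1 := hZeq (ρ n)
        have heq : u n + V (ρ n) = r⁻¹ • (X (ρ n) - p₁) + ((r - S (ρ n)) / r) • V (ρ n) := by
          rw [hu]
          simp only []
          rw [← hr, h1]
          exact smul_aux _ _ _ hrpos.ne'
        have hwR : ‖X (ρ n) - p₁‖ ≤ R := hR _ (hXK (ρ n))
        have habs : |r - S (ρ n)| ≤ R := by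
          have h2 : ‖S (ρ n) • V (ρ n)‖ = S (ρ n) := by
            rw [norm_smul, hVnorm, mul_one, Real.norm_eq_abs,
              abs_of_nonneg (le_trans hδpos.le (hSlb (ρ n)))]
          have h3 := abs_norm_sub_norm_le ((X (ρ n) - p₁) - S (ρ n) • V (ρ n))
            (-(S (ρ n) • V (ρ n)))
          rw [norm_neg, h2] at h3
          have h4 : (X (ρ n) - p₁) - S (ρ n) • V (ρ n) - (-(S (ρ n) • V (ρ n))) =
              X (ρ n) - p₁ := by module
          rw [h4, ← h1, ← hr] at h3
          exact le_trans h3 hwR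
        calc ‖u n + V (ρ n)‖ ≤ ‖r⁻¹ • (X (ρ n) - p₁)‖ + ‖((r - S (ρ n)) / r) • V (ρ n)‖ := by
              rw [heq]; exact norm_add_le _ _
        _ = r⁻¹ * ‖X (ρ n) - p₁‖ + |r - S (ρ n)| / r := by
              rw [norm_smul, norm_smul, hVnorm, mul_one, Real.norm_eq_abs, Real.norm_eq_abs,
                abs_of_nonneg (inv_nonneg.mpr hrpos.le), abs_div, abs_of_nonneg hrpos.le]
        _ ≤ r⁻¹ * R + R / r := by
              have := inv_nonneg.mpr hrpos.le
              gcongr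
        _ = 2 * R / r := by field_simp; ring
      have htendzero : Tendsto (fun n => u n + V (ρ n)) atTop (nhds 0) := by
        refine squeeze_zero_norm' hbound ?_
        exact Tendsto.div_atTop tendsto_const_nhds hZtends
      have hulim : Tendsto u atTop (nhds (-vv)) := by
        have h := htendzero.add (hvconv2.neg)
        rw [zero_add] at h
        refine h.congr (fun n => ?_)
        exact add_neg_cancel_right (u n) (V (ρ n))
      -- the backward ray lies in closure Ω₁
      have hneg : ∀ t : ℝ, 0 ≤ t → p₁ + t • (-vv) ∈ closure Ω₁ := by
        intro t ht
        have hlim : Tendsto (fun n => p₁ + t • u n) atTop (nhds (p₁ + t • (-vv))) :=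
          tendsto_const_nhds.add (hulim.const_smul t)
        refine isClosed_closure.mem_of_tendsto hlim ?_
        filter_upwards [hZtends.eventually_ge_atTop (max t 1)] with n hn
        have hrpos : (0:ℝ) < ‖Z (ρ n) - p₁‖ := lt_of_lt_of_le (lt_max_of_lt_right one_pos) hn
        have hseg2 : p₁ + t • u n ∈ segment ℝ p₁ (Z (ρ n)) := by
          rw [segment_eq_image']
          refine ⟨t / ‖Z (ρ n) - p₁‖, ⟨by positivity, ?_⟩, ?_⟩
          · rw [div_le_one hrpos]
            exact le_trans (le_max_left t 1) hn
          · rw [hu]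
            simp only []
            rw [smul_smul, div_eq_mul_inv]
        have hsub : segment ℝ p₁ (Z (ρ n)) ⊆ closure Ω₁ :=
          (h1conv.closure).segment_subset (subset_closure hp₁)
            (subset_closure (htsub (hZ (ρ n))))
        exact hsub hseg2
      have hpos : ∀ s : ℝ, 0 ≤ s → p₁ + s • vv ∈ closure Ω₁ :=
        rayA h1conv hy₀cl (subset_closure hp₁)
      -- closure Ω₁ is invariant under translation by ±vv
      have hplusinv : ∀ c ∈ closure Ω₁, c + vv ∈ closure Ω₁ := by
        intro c hc
        have := rayA h1conv hpos hc 1 zero_le_one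
        rwa [one_smul] at this
      have hminusinv : ∀ c ∈ closure Ω₁, c - vv ∈ closure Ω₁ := by
        intro c hc
        have := rayA h1conv hneg hc 1 zero_le_one
        rw [one_smul] at this
        rwa [show c + -vv = c - vv by module] at this
      -- contradiction with strict convexity : a boundary point exists
      have hneuniv : closure Ω₁ ≠ Set.univ := by
        intro h
        exact h0proper (Set.eq_univ_of_univ_subset (h ▸ hcl))
      have hclne : (closure Ω₁).Nonempty := ⟨p₁, subset_closure hp₁⟩
      have hfr : (frontier (closure Ω₁)).Nonempty := nonempty_frontier_iff.2 ⟨hclne, hneuniv⟩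
      obtain ⟨b, hb⟩ := hfr
      have hbcl : b ∈ closure Ω₁ := by
        have := frontier_subset_closure (s := closure Ω₁) hb
        rwa [closure_closure] at this
      have hbni : b ∉ interior (closure Ω₁) := by
        rw [frontier, Set.mem_diff, closure_closure] at hb
        exact hb.2
      have hplus := hplusinv b hbcl
      have hminus := hminusinv b hbcl
      have hne2 : b + vv ≠ b - vv := by
        intro h
        apply hvvne
        have h2 : (2:ℝ) • vv = 0 := by
          have : (b + vv) - (b - vv) = (2:ℝ) • vv := by module
          rw [h] at this
          rw [← this]
          module
        have := smul_eq_zero.1 h2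
        rcases this with h3 | h3
        · norm_num at h3
        · exact h3
      have hint := hsc1 hplus hminus hne2 (by norm_num : (0:ℝ) < 1/2)
        (by norm_num : (0:ℝ) < 1/2) (by norm_num)
      have hbeq : (1/2 : ℝ) • (b + vv) + (1/2 : ℝ) • (b - vv) = b := by module
      rw [hbeq] at hint
      exact hbni hint
  · intro H
    -- reverse direction
    intro x v hv hray
    by_contra hno
    push_neg at hno
    obtain ⟨z₀, hz₀⟩ := h1ne
    -- the set of times staying in Ω₁
    obtain ⟨t₀, ht₀0, ht₀⟩ := hno z₀
    set I : Set ℝ := {t : ℝ | 0 ≤ t ∧ z₀ + t • v ∈ Ω₁} with hI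
    have h0I : (0:ℝ) ∈ I := ⟨le_refl 0, by simpa using hz₀⟩
    have hIbdd : BddAbove I := by
      refine ⟨t₀, fun t ht => ?_⟩
      by_contra hlt
      push_neg at hlt
      apply ht₀
      have h01 : t₀ / t ∈ Set.Icc (0:ℝ) 1 := by
        constructor
        · exact div_nonneg ht₀0 (le_of_lt (lt_of_le_of_lt ht₀0 hlt))
        · exact div_le_one_of_le₀ hlt.le (le_of_lt (lt_of_le_of_lt ht₀0 hlt))
      have := h1conv.segment_subset hz₀ ht.2
      rw [segment_eq_image'] at this
      have hmem := this ⟨t₀ / t, h01, rfl⟩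
      have htne : t ≠ 0 := by intro h; rw [h] at hlt; exact absurd (ht₀0.trans_lt hlt) (lt_irrefl _)
      convert hmem using 2
      simp only [add_sub_cancel_left]
      rw [smul_smul, div_mul_cancel₀ _ htne]
    set T : ℝ := sSup I with hT
    have hT0 : 0 ≤ T := le_csSup hIbdd h0I
    set p := z₀ + T • v with hp
    have hnotin : ∀ t : ℝ, T < t → z₀ + t • v ∉ Ω₁ := by
      intro t hTt hmem
      exact absurd (le_csSup hIbdd ⟨hT0.trans hTt.le, hmem⟩) (not_le.mpr hTt)
    -- rays in Ω₀
    have hrayv : ∀ t : ℝ, 0 ≤ t → z₀ + t • v ∈ Ω₀ :=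
      rayB h0conv h0open (q := x) (fun s hs => subset_closure (hray s hs))
        (hcl (subset_closure hz₀))
    -- small ball around z₀
    obtain ⟨r, hr, hball⟩ := Metric.isOpen_iff.1 h1open z₀ hz₀
    set Ωt₁ := Metric.ball z₀ (r/2) with hΩt₁
    have htsub : closure Ωt₁ ⊆ Ω₁ := by
      refine subset_trans ?_ hball
      refine subset_trans closure_ball_subset_closedBall ?_
      intro w hw
      rw [Metric.mem_closedBall] at hw
      exact Metric.mem_ball.2 (by linarith)
    set x₀ := z₀ + (T + 1) • v with hx₀
    have hx₀mem : x₀ ∈ closure Ω₀ \ Ω₁ :=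
      ⟨subset_closure (hrayv _ (by linarith)), hnotin _ (by linarith)⟩
    obtain ⟨C, hC⟩ := H Ωt₁ Metric.isOpen_ball htsub {x₀} (by simpa using hx₀mem)
      isCompact_singleton
    -- now pick y far along the ray
    set t : ℝ := (T + 1) * (|C| + 1) with ht
    set y := z₀ + (T + 1 + t) • v with hy
    have hymem : y ∈ closure Ω₀ \ Ω₁ := by
      refine ⟨subset_closure (hrayv _ ?_), hnotin _ ?_⟩
      · positivity
      · have : 0 < t := by positivity
        linarith
    have hz₀T : z₀ ∈ closure Ωt₁ := subset_closure (Metric.mem_ball_self (by positivity))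
    have hseg : x₀ ∈ segment ℝ y z₀ := by
      rw [hy, hx₀]
      exact seg_helper (by linarith) (le_add_of_nonneg_right (by positivity)) (by positivity)
    have := hC x₀ rfl y hymem z₀ hz₀T hseg
    have hxy : ‖x₀ - y‖ = t * ‖v‖ := by
      rw [hx₀, hy]
      have : (z₀ + (T + 1) • v) - (z₀ + (T + 1 + t) • v) = (-t) • v := by module
      rw [this, norm_smul]
      simp [abs_of_nonneg (show (0:ℝ) ≤ t by positivity)]
    have hxz : ‖x₀ - z₀‖ = (T + 1) * ‖v‖ := by
      rw [hx₀]
      have : (z₀ + (T + 1) • v) - z₀ = (T + 1) • v := by module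
      rw [this, norm_smul]
      simp [abs_of_nonneg (show (0:ℝ) ≤ T + 1 by linarith)]
    have hvpos : 0 < ‖v‖ := norm_pos_iff.mpr hv
    have hratio : ‖x₀ - y‖ / ‖x₀ - z₀‖ = |C| + 1 := by
      rw [hxy, hxz, ht]
      field_simp
    have hle : |C| + 1 ≤ C := le_trans (le_max_right _ _) (by rwa [hratio] at this)
    have : C ≤ |C| := le_abs_self C
    linarith
end
end

section
/- Let Ω satisfy the strict convexity condition. Let x ∈ ∂Ω₁ ∩ Ω, let ℓ ⊆ Ω be a transversal segment with endpoint x, and let s ⊆ Ω be another segment with endpoint x. Then the convex hull of ℓ ∪ s is contained in Ω; moreover, this convex hull, except for the point x itself, lies inside Ω* = cl(Ω₀) \ cl(Ω₁). -/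
noncomputable section

/-- For an open convex set, the interior of the closure is contained in the set. -/
lemma aux_open_convex_interior_closure {E : Type*} [NormedAddCommGroup E] [NormedSpace ℝ E]
    {s : Set E} (ho : IsOpen s) (hc : Convex ℝ s) : interior (closure s) ⊆ s := by
  intro m hm
  rcases s.eq_empty_or_nonempty with rfl | ⟨v, hv⟩
  · simpa using hm
  by_cases hmv : m = v
  · exact hmv ▸ hv
  obtain ⟨ε, hε, hball⟩ := Metric.isOpen_iff.mp isOpen_interior m hm
  have hnorm : 0 < ‖m - v‖ := by
    rw [norm_pos_iff, sub_ne_zero]; exact hmv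
  set δ : ℝ := ε / (2 * ‖m - v‖) with hδ
  have hδpos : 0 < δ := div_pos hε (by positivity)
  set m' := m + δ • (m - v) with hm'
  have hm'mem : m' ∈ closure s := by
    have hdist : dist m' m < ε := by
      rw [dist_eq_norm]
      have : m' - m = δ • (m - v) := by rw [hm']; abel
      rw [this, norm_smul, Real.norm_eq_abs, abs_of_pos hδpos, hδ, div_mul_eq_mul_div,
        div_lt_iff₀ (by positivity)]
      nlinarith
    exact interior_subset (hball (Metric.mem_ball.mpr hdist))
  have hmseg : m ∈ openSegment ℝ v m' := by
    refine ⟨δ/(1+δ), 1/(1+δ), by positivity, by positivity, by field_simp; ring, ?_⟩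
    rw [hm']
    match_scalars <;> (field_simp; try ring)
  have := hc.openSegment_interior_closure_subset_interior
    (by rwa [ho.interior_eq]) hm'mem hmseg
  rwa [ho.interior_eq] at this

/-- If `x ∈ ∂Ω₁`, `ℓ = [x,p] ⊆ Ω` is a transversal segment with endpoint `x` (the line
containing it intersects `Ω₁`), and `s = [x,q] ⊆ Ω` is another segment with endpoint `x`,
then the convex hull of `ℓ ∪ s` lies in `Ω = cl Ω₀ \ Ω₁`; moreover this convex hull, except
for the point `x` itself, lies inside `Ω* = cl Ω₀ \ cl Ω₁`. -/
theorem statement9 {d : ℕ} (hd : 2 ≤ d)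
    (Ω₀ Ω₁ : Set (EuclideanSpace ℝ (Fin d)))
    (h0open : IsOpen Ω₀) (h0conv : Convex ℝ Ω₀) (h0ne : Ω₀.Nonempty)
    (h0proper : Ω₀ ≠ Set.univ)
    (h1open : IsOpen Ω₁) (h1conv : Convex ℝ Ω₁) (h1ne : Ω₁.Nonempty)
    (hcl : closure Ω₁ ⊆ Ω₀)
    (hsc0 : StrictConvex ℝ (closure Ω₀)) (hsc1 : StrictConvex ℝ (closure Ω₁))
    (x p q : EuclideanSpace ℝ (Fin d))
    (hx : x ∈ frontier Ω₁) (hxΩ : x ∈ closure Ω₀ \ Ω₁)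
    (hp : segment ℝ x p ⊆ closure Ω₀ \ Ω₁)
    (hq : segment ℝ x q ⊆ closure Ω₀ \ Ω₁)
    (hpx : p ≠ x)
    (htrans : ∃ t : ℝ, x + t • (p - x) ∈ Ω₁) :
    convexHull ℝ {x, p, q} ⊆ closure Ω₀ \ Ω₁ ∧
      ∀ w ∈ convexHull ℝ {x, p, q}, w ≠ x → w ∈ closure Ω₀ \ closure Ω₁ := by
  obtain ⟨t, hyΩ⟩ := htrans
  set y := x + t • (p - x) with hy
  have hxcl : x ∈ closure Ω₁ := frontier_subset_closure hx
  have h1int : interior Ω₁ = Ω₁ := h1open.interior_eq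
  -- membership of endpoints in closure Ω₀
  have hxΩ0 : x ∈ closure Ω₀ := hxΩ.1
  have hpΩ0 : p ∈ closure Ω₀ := (hp (right_mem_segment ℝ x p)).1
  have hqΩ0 : q ∈ closure Ω₀ := (hq (right_mem_segment ℝ x q)).1
  have hullΩ0 : convexHull ℝ ({x, p, q} : Set (EuclideanSpace ℝ (Fin d))) ⊆ closure Ω₀ := by
    apply convexHull_min _ h0conv.closure
    intro z hz
    rcases hz with rfl | rfl | rfl
    · exact hxΩ0
    · exact hpΩ0
    · exact hqΩ0
  -- t < 0 :
  have ht0 : t < 0 := by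
    by_contra hle
    push_neg at hle
    rcases le_or_gt t 1 with h1 | h1
    · have : y ∈ segment ℝ x p := by
        rw [segment_eq_image']
        exact ⟨t, ⟨hle, h1⟩, rfl⟩
      exact (hp this).2 hyΩ
    · have ht1 : (0:ℝ) < t := lt_trans one_pos h1
      have hpmem : p ∈ openSegment ℝ x y := by
        refine ⟨1 - 1/t, 1/t, ?_, by positivity, by ring, ?_⟩
        · have : 1/t < 1 := by
            rw [div_lt_one ht1]; exact h1
          linarith
        · rw [hy]; match_scalars <;> (field_simp; try ring)
      have := h1conv.openSegment_closure_interior_subset_interior hxcl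
        (by rwa [h1int]) hpmem
      rw [h1int] at this
      exact (hp (right_mem_segment ℝ x p)).2 this
  -- Step 1 : the hull avoids Ω₁
  have step1 : ∀ w ∈ convexHull ℝ ({x, p, q} : Set (EuclideanSpace ℝ (Fin d))), w ∉ Ω₁ := by
    intro w hw hwΩ
    rw [show ({x, p, q} : Set (EuclideanSpace ℝ (Fin d))) = insert x {p, q} from rfl,
      convexHull_insert ⟨p, by simp⟩, mem_convexJoin] at hw
    obtain ⟨x', hx', z, hz, hwseg⟩ := hw
    rw [Set.mem_singleton_iff] at hx'
    rw [hx'] at hwseg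
    rw [convexHull_pair] at hz
    obtain ⟨u, v, hu, hv, huv, rfl⟩ := hz
    obtain ⟨a, e, ha, he, hae, rfl⟩ := hwseg
    set b : ℝ := e * u with hb
    set c : ℝ := e * v with hc'
    have hb0 : 0 ≤ b := mul_nonneg he hu
    have hc0 : 0 ≤ c := mul_nonneg he hv
    have hsum : a + b + c = 1 := by
      rw [hb, hc']; nlinarith
    have hbt : 0 < b - t := by linarith
    set lam : ℝ := b / (b - t) with hlam
    have hlam0 : 0 ≤ lam := div_nonneg hb0 hbt.le
    have hlam1 : lam ≤ 1 := by
      rw [hlam, div_le_one hbt]; linarith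
    set γ : ℝ := (-t) * c / (b - t) with hγ
    have hγ0 : 0 ≤ γ := div_nonneg (mul_nonneg (by linarith) hc0) hbt.le
    have hγ1 : γ ≤ 1 := by
      rw [hγ, div_le_one hbt]
      nlinarith
    set z' := lam • y + (1 - lam) • (a • x + e • (u • p + v • q)) with hz'
    have hz'Ω : z' ∈ Ω₁ :=
      h1conv hyΩ hwΩ hlam0 (by linarith) (by ring)
    have hz'seg : z' ∈ segment ℝ x q := by
      refine ⟨1 - γ, γ, by linarith, hγ0, by ring, ?_⟩
      rw [hz', hy, hlam, hγ, hb, hc']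
      have hsum' : a + e * u + e * v = 1 := by rw [← hb, ← hc']; exact hsum
      have hne : e * u - t ≠ 0 := by rw [← hb]; exact hbt.ne'
      match_scalars <;> field_simp
      · linear_combination t * hsum'
      · ring
      · ring
    exact (hq hz'seg).2 hz'Ω
  refine ⟨fun w hw => ⟨hullΩ0 hw, step1 w hw⟩, ?_⟩
  intro w hw hwx
  refine ⟨hullΩ0 hw, fun hwcl => ?_⟩
  have hmid : (1/2 : ℝ) • x + (1/2 : ℝ) • w ∈ interior (closure Ω₁) :=
    hsc1 hxcl hwcl (Ne.symm hwx) (by norm_num) (by norm_num) (by norm_num)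
  have hmidΩ : (1/2 : ℝ) • x + (1/2 : ℝ) • w ∈ Ω₁ :=
    aux_open_convex_interior_closure h1open h1conv hmid
  have hxhull : x ∈ convexHull ℝ ({x, p, q} : Set (EuclideanSpace ℝ (Fin d))) :=
    subset_convexHull ℝ _ (by simp)
  have hmidhull : (1/2 : ℝ) • x + (1/2 : ℝ) • w ∈
      convexHull ℝ ({x, p, q} : Set (EuclideanSpace ℝ (Fin d))) :=
    (convex_convexHull ℝ _) hxhull hw (by norm_num) (by norm_num) (by norm_num)
  exact step1 _ hmidhull hmidΩ
end
end

section
/- Let Ω be a lens (Ω₀, Ω₁ satisfy cl(Ω₁) ⊆ Ω₀, the strict convexity condition, and the cone condition). Then for every x ∈ ∂Ω₁ the visibility set Vis_x = { y ∈ Ω : [x,y] ⊆ Ω } is compact, and the diameter of Vis_x is uniformly bounded as x runs through any compact subset of ∂Ω₁. -/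
noncomputable section

/-- The set of points of `ω` visible from `x` in `ω`. -/
def visSet {d : ℕ} (ω : Set (EuclideanSpace ℝ (Fin d))) (x : EuclideanSpace ℝ (Fin d)) :
    Set (EuclideanSpace ℝ (Fin d)) :=
  {y ∈ ω | segment ℝ x y ⊆ ω}

/-- For an open convex set, the interior of the closure is the set itself. -/
lemma aux_interior_closure {E : Type*} [NormedAddCommGroup E] [NormedSpace ℝ E] {s : Set E}
    (hconv : Convex ℝ s) (hopen : IsOpen s) (hne : s.Nonempty) :
    interior (closure s) ⊆ s := by
  obtain ⟨z, hz⟩ := hne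
  intro w hw
  have hcont : Filter.Tendsto (fun t : ℝ => z + t • (w - z)) (nhds 1) (nhds w) := by
    have : Filter.Tendsto (fun t : ℝ => z + t • (w - z)) (nhds 1)
        (nhds (z + (1 : ℝ) • (w - z))) :=
      tendsto_const_nhds.add (Filter.tendsto_id.smul_const _)
    simpa using this
  have hev : ∀ᶠ t in nhds (1 : ℝ), z + t • (w - z) ∈ closure s :=
    hcont.eventually_mem (Filter.mem_of_superset (isOpen_interior.mem_nhds hw) interior_subset)
  obtain ⟨t₀, ht₀cl, ht₀1⟩ :
      ∃ t₀ : ℝ, (z + t₀ • (w - z) ∈ closure s) ∧ t₀ ∈ Set.Ioi (1 : ℝ) :=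
    ((hev.filter_mono (nhdsWithin_le_nhds (s := Set.Ioi (1 : ℝ)))).and
      eventually_mem_nhdsWithin).exists
  have ht₀1' : (1 : ℝ) < t₀ := ht₀1
  have ht₀pos : (0 : ℝ) < t₀ := lt_trans one_pos ht₀1'
  have ht₀0 : t₀ ≠ 0 := ne_of_gt ht₀pos
  have hb : 0 < 1 - 1 / t₀ := by
    have : 1 / t₀ < 1 := by
      rw [div_lt_one ht₀pos]; exact ht₀1'
    linarith
  have key := hconv.combo_closure_interior_mem_interior ht₀cl
    (by rwa [hopen.interior_eq]) (a := 1 / t₀) (b := 1 - 1 / t₀)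
    (by positivity) hb (by ring)
  rw [hopen.interior_eq] at key
  have heq : (1 / t₀) • (z + t₀ • (w - z)) + (1 - 1 / t₀) • z = w := by
    rw [smul_add, smul_smul, one_div, inv_mul_cancel₀ ht₀0, sub_smul, one_smul, one_smul]
    abel
  rwa [heq] at key

/-- Points on the segment in normalized-direction form. -/
lemma aux_mem_seg {E : Type*} [NormedAddCommGroup E] [NormedSpace ℝ E] (x y : E) (t : ℝ)
    (ht : 0 ≤ t) (hL : t ≤ ‖y - x‖) (hpos : 0 < ‖y - x‖) :
    x + t • (‖y - x‖⁻¹ • (y - x)) ∈ segment ℝ x y := by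
  refine ⟨1 - t / ‖y - x‖, t / ‖y - x‖, ?_, by positivity, by ring, ?_⟩
  · have : t / ‖y - x‖ ≤ 1 := (div_le_one hpos).mpr hL
    linarith
  · rw [smul_smul, smul_sub, sub_smul, one_smul, div_eq_mul_inv]
    abel

/-- The visibility set of a closed set is closed. -/
lemma aux_visSet_isClosed {d : ℕ} {ω : Set (EuclideanSpace ℝ (Fin d))} (hω : IsClosed ω)
    (x : EuclideanSpace ℝ (Fin d)) : IsClosed (visSet ω x) := by
  have hrw : visSet ω x
      = ω ∩ ⋂ θ ∈ Set.Icc (0 : ℝ) 1, (fun y => (1 - θ) • x + θ • y) ⁻¹' ω := by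
    ext y
    constructor
    · rintro ⟨hyω, hsub⟩
      refine ⟨hyω, Set.mem_iInter₂.mpr fun θ hθ => ?_⟩
      exact hsub (by rw [segment_eq_image]; exact ⟨θ, hθ, rfl⟩)
    · rintro ⟨hyω, h⟩
      refine ⟨hyω, ?_⟩
      rw [segment_eq_image]
      rintro p ⟨θ, hθ, rfl⟩
      exact Set.mem_iInter₂.mp h θ hθ
  rw [hrw]
  refine hω.inter (isClosed_biInter fun θ _ => hω.preimage ?_)
  exact continuous_const.add (continuous_id.const_smul θ)

/-- Main boundedness lemma: the union of visibility sets over a compact subset of the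
free boundary is bounded. -/
lemma aux_bounded {d : ℕ} (Ω₀ Ω₁ : Set (EuclideanSpace ℝ (Fin d)))
    (h0open : IsOpen Ω₀) (h0conv : Convex ℝ Ω₀)
    (h1open : IsOpen Ω₁) (h1conv : Convex ℝ Ω₁) (h1ne : Ω₁.Nonempty)
    (hcl : closure Ω₁ ⊆ Ω₀) (hsc1 : StrictConvex ℝ (closure Ω₁))
    (hcone : ConeCondition Ω₀ Ω₁)
    (K : Set (EuclideanSpace ℝ (Fin d))) (hK : K ⊆ frontier Ω₁) (hKc : IsCompact K) :
    Bornology.IsBounded (⋃ x ∈ K, visSet (closure Ω₀ \ Ω₁) x) := by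
  classical
  by_contra hub
  obtain ⟨R, hR⟩ := isBounded_iff_forall_norm_le.mp hKc.isBounded
  rw [isBounded_iff_forall_norm_le] at hub
  push_neg at hub
  have H : ∀ n : ℕ, ∃ p : EuclideanSpace ℝ (Fin d) × EuclideanSpace ℝ (Fin d),
      p.1 ∈ K ∧ p.2 ∈ visSet (closure Ω₀ \ Ω₁) p.1 ∧ (n : ℝ) + R < ‖p.2‖ := by
    intro n
    obtain ⟨y, hyS, hy⟩ := hub ((n : ℝ) + R)
    simp only [Set.mem_iUnion, exists_prop] at hyS
    obtain ⟨x, hxK, hyx⟩ := hyS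
    exact ⟨(x, y), hxK, hyx, hy⟩
  choose P hPK hPvis hPn using H
  set X : ℕ → EuclideanSpace ℝ (Fin d) := fun n => (P n).1 with hX
  set Y : ℕ → EuclideanSpace ℝ (Fin d) := fun n => (P n).2 with hYdef
  have hL : ∀ n : ℕ, (n : ℝ) < ‖Y n - X n‖ := by
    intro n
    have h1 := norm_sub_norm_le (Y n) (X n)
    have h2 : ‖X n‖ ≤ R := hR _ (hPK n)
    have h3 := hPn n
    linarith
  have hLpos : ∀ n : ℕ, (0 : ℝ) < ‖Y n - X n‖ := fun n =>
    lt_of_le_of_lt (Nat.cast_nonneg n) (hL n)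
  set V : ℕ → EuclideanSpace ℝ (Fin d) := fun n => ‖Y n - X n‖⁻¹ • (Y n - X n) with hV
  have hVs : ∀ n, V n ∈ Metric.sphere (0 : EuclideanSpace ℝ (Fin d)) 1 := by
    intro n
    rw [mem_sphere_zero_iff_norm, hV]
    simp only [norm_smul, norm_inv, norm_norm]
    exact inv_mul_cancel₀ (ne_of_gt (hLpos n))
  have hu : ∀ n, (X n, V n) ∈ K ×ˢ Metric.sphere (0 : EuclideanSpace ℝ (Fin d)) 1 :=
    fun n => ⟨hPK n, hVs n⟩
  obtain ⟨q, hqmem, φ, hφ, hqlim⟩ :=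
    (hKc.prod (isCompact_sphere (0 : EuclideanSpace ℝ (Fin d)) 1)).tendsto_subseq hu
  obtain ⟨hxK, hvsph⟩ := Set.mem_prod.mp hqmem
  set x : EuclideanSpace ℝ (Fin d) := q.1 with hxdef
  set v : EuclideanSpace ℝ (Fin d) := q.2 with hvdef
  have hqlim' : Filter.Tendsto (fun n => (X (φ n), V (φ n))) Filter.atTop (nhds (x, v)) :=
    hqlim
  have hlimX : Filter.Tendsto (fun n => X (φ n)) Filter.atTop (nhds x) :=
    hqlim'.fst_nhds
  have hlimV : Filter.Tendsto (fun n => V (φ n)) Filter.atTop (nhds v) :=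
    hqlim'.snd_nhds
  have hseg : ∀ m : ℕ, ∀ t : ℝ, 0 ≤ t → t ≤ ‖Y m - X m‖ →
      X m + t • V m ∈ closure Ω₀ \ Ω₁ := by
    intro m t ht htL
    exact (hPvis m).2 (aux_mem_seg (X m) (Y m) t ht htL (hLpos m))
  have hφn : ∀ n : ℕ, (n : ℝ) ≤ ‖Y (φ n) - X (φ n)‖ := by
    intro n
    have : (n : ℝ) ≤ (φ n : ℝ) := Nat.cast_le.mpr hφ.le_apply
    exact this.trans (hL (φ n)).le
  -- the limit ray lies in the closure of Ω₀
  have hray_cl : ∀ t : ℝ, 0 ≤ t → x + t • v ∈ closure Ω₀ := by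
    intro t ht
    rw [← closure_closure (s := Ω₀)]
    refine mem_closure_of_tendsto (hlimX.add (hlimV.const_smul t)) ?_
    filter_upwards [Filter.eventually_ge_atTop ⌈t⌉₊] with n hn
    have h1 : t ≤ (n : ℝ) := (Nat.le_ceil t).trans (Nat.cast_le.mpr hn)
    exact (hseg (φ n) t ht (h1.trans (hφn n))).1
  have hxΩ0 : x ∈ Ω₀ := hcl (frontier_subset_closure (hK hxK))
  have hray : ∀ t : ℝ, 0 ≤ t → x + t • v ∈ Ω₀ := by
    intro t ht
    rcases ht.eq_or_lt with h | h
    · rw [← h]; simpa using hxΩ0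
    · have h2 := hray_cl (2 * t) (by positivity)
      have hc := h0conv.combo_interior_closure_mem_interior (x := x) (y := x + (2 * t) • v)
        (by rwa [h0open.interior_eq]) h2 (a := 1/2) (b := 1/2) one_half_pos (by norm_num)
        (by norm_num)
      rw [h0open.interior_eq] at hc
      have heq : (1/2 : ℝ) • x + (1/2 : ℝ) • (x + (2 * t) • v) = x + t • v := by
        module
      rwa [heq] at hc
  have hv1 : ‖v‖ = 1 := mem_sphere_zero_iff_norm.mp hvsph
  have hvne : v ≠ 0 := by
    intro h; rw [h, norm_zero] at hv1; norm_num at hv1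
  obtain ⟨y', hy'⟩ := hcone x v hvne hray
  have hx_cl1 : x ∈ closure Ω₁ := frontier_subset_closure (hK hxK)
  -- x + 2v lies in the closure of Ω₁
  have hb : ∀ n : ℕ, (1 / ((n : ℝ) + 1)) • y' + (1 - 1 / ((n : ℝ) + 1)) • x
      + (2 : ℝ) • v ∈ Ω₁ := by
    intro n
    set s : ℝ := 1 / ((n : ℝ) + 1) with hsdef
    have hs : 0 < s := by positivity
    have hs1 : s ≤ 1 := by
      rw [hsdef, div_le_one (by positivity)]
      have : (0 : ℝ) ≤ (n : ℝ) := Nat.cast_nonneg n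
      linarith
    have hp : y' + (2 / s) • v ∈ Ω₁ := hy' (2 / s) (by positivity)
    have hcombo := h1conv.combo_interior_closure_mem_interior
      (x := y' + (2 / s) • v) (y := x) (by rwa [h1open.interior_eq]) hx_cl1
      (a := s) (b := 1 - s) hs (by linarith) (by ring)
    rw [h1open.interior_eq] at hcombo
    have heq : s • (y' + (2 / s) • v) + (1 - s) • x
        = s • y' + (1 - s) • x + (2 : ℝ) • v := by
      have h2 : s * (2 / s) = 2 := by field_simp
      rw [smul_add, smul_smul, h2]; abel
    rwa [heq] at hcombo
  have hlimb : Filter.Tendsto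
      (fun n : ℕ => (1 / ((n : ℝ) + 1)) • y' + (1 - 1 / ((n : ℝ) + 1)) • x + (2 : ℝ) • v)
      Filter.atTop (nhds (x + (2 : ℝ) • v)) := by
    have h0 : Filter.Tendsto (fun n : ℕ => 1 / ((n : ℝ) + 1)) Filter.atTop (nhds 0) :=
      tendsto_one_div_add_atTop_nhds_zero_nat
    have h1 : Filter.Tendsto (fun n : ℕ => (1 : ℝ) - 1 / ((n : ℝ) + 1)) Filter.atTop
        (nhds ((1 : ℝ) - 0)) := tendsto_const_nhds.sub h0
    have h3 : Filter.Tendsto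
        (fun n : ℕ => ((1 / ((n : ℝ) + 1)) • y' + ((1 : ℝ) - 1 / ((n : ℝ) + 1)) • x)
          + (2 : ℝ) • v) Filter.atTop
        (nhds (((0 : ℝ) • y' + ((1 : ℝ) - 0) • x) + (2 : ℝ) • v)) :=
      ((h0.smul_const y').add (h1.smul_const x)).add tendsto_const_nhds
    simpa using h3
  have hp_cl : x + (2 : ℝ) • v ∈ closure Ω₁ :=
    mem_closure_of_tendsto hlimb (Filter.Eventually.of_forall hb)
  -- strict convexity gives x + v ∈ Ω₁
  have hne2 : x ≠ x + (2 : ℝ) • v := by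
    intro h
    have : (2 : ℝ) • v = 0 := by
      have := congrArg (fun z => z - x) h
      simpa using this.symm
    exact hvne (by
      have := smul_eq_zero.mp this
      rcases this with h' | h'
      · norm_num at h'
      · exact h')
  have hmid0 := hsc1 hx_cl1 hp_cl hne2 one_half_pos one_half_pos (by norm_num)
  have hmid : x + v ∈ Ω₁ := by
    have heq : (1/2 : ℝ) • x + (1/2 : ℝ) • (x + (2 : ℝ) • v) = x + v := by module
    rw [heq] at hmid0
    exact aux_interior_closure h1conv h1open h1ne hmid0
  -- contradiction
  have hlim1 : Filter.Tendsto (fun n => X (φ n) + (1 : ℝ) • V (φ n)) Filter.atTop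
      (nhds (x + v)) := by
    simpa using hlimX.add (hlimV.const_smul (1 : ℝ))
  obtain ⟨n, hmem, hn1⟩ :=
    ((hlim1.eventually_mem (h1open.mem_nhds hmid)).and (Filter.eventually_ge_atTop 1)).exists
  have h1L : (1 : ℝ) ≤ ‖Y (φ n) - X (φ n)‖ := by
    have : (1 : ℝ) ≤ (n : ℝ) := by exact_mod_cast hn1
    exact this.trans (hφn n)
  exact (hseg (φ n) 1 zero_le_one h1L).2 hmem

/-- For a lens `Ω = cl Ω₀ \ Ω₁`, the visibility set `Vis_x` is compact for every
`x ∈ ∂Ω₁`, and its diameter is uniformly bounded as `x` runs through any compact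
subset of `∂Ω₁`. -/
theorem statement12 {d : ℕ} (hd : 2 ≤ d)
    (Ω₀ Ω₁ : Set (EuclideanSpace ℝ (Fin d)))
    (h0open : IsOpen Ω₀) (h0conv : Convex ℝ Ω₀) (h0ne : Ω₀.Nonempty)
    (h0proper : Ω₀ ≠ Set.univ)
    (h1open : IsOpen Ω₁) (h1conv : Convex ℝ Ω₁) (h1ne : Ω₁.Nonempty)
    (hcl : closure Ω₁ ⊆ Ω₀)
    (hsc0 : StrictConvex ℝ (closure Ω₀)) (hsc1 : StrictConvex ℝ (closure Ω₁))
    (hcone : ConeCondition Ω₀ Ω₁) :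
    (∀ x ∈ frontier Ω₁, IsCompact (visSet (closure Ω₀ \ Ω₁) x)) ∧
    ∀ K : Set (EuclideanSpace ℝ (Fin d)), K ⊆ frontier Ω₁ → IsCompact K →
      ∃ C : ℝ, ∀ x ∈ K, ∀ y ∈ visSet (closure Ω₀ \ Ω₁) x,
        ∀ z ∈ visSet (closure Ω₀ \ Ω₁) x, dist y z ≤ C := by
  have hΩclosed : IsClosed (closure Ω₀ \ Ω₁) := isClosed_closure.sdiff h1open
  constructor
  · intro x hx
    have hb := aux_bounded Ω₀ Ω₁ h0open h0conv h1open h1conv h1ne hcl hsc1 hcone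
      {x} (Set.singleton_subset_iff.mpr hx) isCompact_singleton
    refine Metric.isCompact_of_isClosed_isBounded (aux_visSet_isClosed hΩclosed x)
      (hb.subset ?_)
    simp
  · intro K hKsub hKc
    have hb := aux_bounded Ω₀ Ω₁ h0open h0conv h1open h1conv h1ne hcl hsc1 hcone
      K hKsub hKc
    rw [Metric.isBounded_iff] at hb
    obtain ⟨C, hC⟩ := hb
    refine ⟨C, fun x hx y hy z hz => hC ?_ ?_⟩
    · exact Set.mem_iUnion₂.mpr ⟨x, hx, hy⟩
    · exact Set.mem_iUnion₂.mpr ⟨x, hx, hz⟩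
end
end
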